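/- arXiv:1908.00665 — 5 statements merged into one kernel-verified Lean document; each statement's English description precedes it below -/
import Mathlib

section
/- Every graph G on n vertices with more than (l-2)n/2 edges contains a path on l vertices as a subgraph, for every l ≥ 2. -/
open SimpleGraph

/-- `G` embeds into `H` as a (not necessarily induced) subgraph. -/
def SubgraphOf {V W : Type*} (G : SimpleGraph V) (H : SimpleGraph W) : Prop :=
  ∃ f : V ↪ W, ∀ a b, G.Adj a b → H.Adj (f a) (f b)

/-- `G` contains a linear forest consisting of pairwise vertex-disjoint paths
with orders `L i` (`i : ι`). -/
def ContainsForest {V ι : Type*} (G : SimpleGraph V) (L : ι → ℕ) : Prop :=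
  ∃ f : ∀ i, Fin (L i) → V,
    (∀ i, Function.Injective (f i)) ∧
    (∀ i j, i ≠ j → ∀ a b, f i a ≠ f j b) ∧
    (∀ i (a : ℕ) (ha : a + 1 < L i), G.Adj (f i ⟨a, by omega⟩) (f i ⟨a + 1, ha⟩))

/-- `G` is 2-connected: more than 2 vertices and removing fewer than 2 vertices
leaves a connected graph. -/
def TwoConnected {V : Type*} [Fintype V] (G : SimpleGraph V) : Prop :=
  2 < Fintype.card V ∧
    ∀ s : Finset V, s.card < 2 → (G.induce ((s : Set V)ᶜ)).Connected

/-- `S_{n,h} = K_h ∨ \overline{K_{n-h}}`. -/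
def Sgraph (n h : ℕ) : SimpleGraph (Fin n) :=
  SimpleGraph.fromRel (fun a _ => a.val < h)

/-- `S⁺_{n,h} = K_h ∨ (K_2 ∪ \overline{K_{n-h-2}})`, the extra edge joining vertices `h` and `h+1`. -/
def SplusGraph (n h : ℕ) : SimpleGraph (Fin n) :=
  SimpleGraph.fromRel (fun a b => a.val < h ∨ (a.val ≤ h + 1 ∧ b.val ≤ h + 1))

/-- index of the clique block containing vertex `v ≥ 1` in `K_1 ∨ (t₁ K_h ∪ t₂ K_{h+1})`. -/
def blockIdx (t₁ h v : ℕ) : ℕ :=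
  if v - 1 < t₁ * h then (v - 1) / h else t₁ + (v - 1 - t₁ * h) / (h + 1)

/-- `L_{t₁,t₂,h,h+1} = K_1 ∨ (t₁ K_h ∪ t₂ K_{h+1})`; vertex `0` is the center. -/
def Lgen (t₁ t₂ h : ℕ) : SimpleGraph (Fin (t₁ * h + t₂ * (h + 1) + 1)) :=
  SimpleGraph.fromRel (fun a b =>
    a.val = 0 ∨ blockIdx t₁ h a.val = blockIdx t₁ h b.val)

/-- `U_{3,h}`: three copies of `K_{h+1}` plus a triangle on one chosen vertex of each. -/
def Ugraph (h : ℕ) : SimpleGraph (Fin (3 * (h + 1))) :=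
  SimpleGraph.fromRel (fun a b =>
    a.val / (h + 1) = b.val / (h + 1) ∨ (a.val % (h + 1) = 0 ∧ b.val % (h + 1) = 0))

/-- `K_p ∨ (m K_2)`: a clique on the first `p` vertices joined to `m` disjoint edges. -/
def KjoinMK2 (p m : ℕ) : SimpleGraph (Fin (p + 2 * m)) :=
  SimpleGraph.fromRel (fun a b => a.val < p ∨ (a.val - p) / 2 = (b.val - p) / 2)

/-- `F_{t₁,t₂,h,h+1}`: `L_{t₁,t₂,h,h+1}` plus one extra `K_{h+1}` joined to the center by an edge. -/
def Fgraph (t₁ t₂ h : ℕ) : SimpleGraph (Fin (t₁ * h + (t₂ + 1) * (h + 1) + 1)) :=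
  SimpleGraph.fromRel (fun a b =>
    (a.val < t₁ * h + t₂ * (h + 1) + 1 ∧ b.val < t₁ * h + t₂ * (h + 1) + 1 ∧
      (a.val = 0 ∨ blockIdx t₁ h a.val = blockIdx t₁ h b.val)) ∨
    (t₁ * h + t₂ * (h + 1) + 1 ≤ a.val ∧ t₁ * h + t₂ * (h + 1) + 1 ≤ b.val) ∨
    (a.val = 0 ∧ b.val = t₁ * h + t₂ * (h + 1) + 1))

/-- `T_{t₁,t₂,h,h+1}`: `L_{t₁,t₂,h,h+1}` plus two extra `K_{h+1}`'s, each joined to the center by an edge. -/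
def Tgraph (t₁ t₂ h : ℕ) : SimpleGraph (Fin (t₁ * h + (t₂ + 2) * (h + 1) + 1)) :=
  SimpleGraph.fromRel (fun a b =>
    (a.val < t₁ * h + t₂ * (h + 1) + 1 ∧ b.val < t₁ * h + t₂ * (h + 1) + 1 ∧
      (a.val = 0 ∨ blockIdx t₁ h a.val = blockIdx t₁ h b.val)) ∨
    (t₁ * h + t₂ * (h + 1) + 1 ≤ a.val ∧ a.val < t₁ * h + (t₂ + 1) * (h + 1) + 1 ∧
      t₁ * h + t₂ * (h + 1) + 1 ≤ b.val ∧ b.val < t₁ * h + (t₂ + 1) * (h + 1) + 1) ∨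
    (t₁ * h + (t₂ + 1) * (h + 1) + 1 ≤ a.val ∧ t₁ * h + (t₂ + 1) * (h + 1) + 1 ≤ b.val) ∨
    (a.val = 0 ∧ b.val = t₁ * h + t₂ * (h + 1) + 1) ∨
    (a.val = 0 ∧ b.val = t₁ * h + (t₂ + 1) * (h + 1) + 1))

/-- attach a pendant path with `m` additional vertices at the vertex `u` of `H`
(i.e. identify `u` with an endpoint of `P_{m+1}`). -/
def attachPath {V : Type*} (H : SimpleGraph V) (u : V) (m : ℕ) : SimpleGraph (V ⊕ Fin m) :=
  SimpleGraph.fromRel (fun a b =>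
    (∃ x y, a = Sum.inl x ∧ b = Sum.inl y ∧ H.Adj x y) ∨
    (∃ j : Fin m, a = Sum.inl u ∧ b = Sum.inr j ∧ j.val = 0) ∨
    (∃ i j : Fin m, a = Sum.inr i ∧ b = Sum.inr j ∧ j.val = i.val + 1))

set_option linter.unusedSectionVars false
set_option linter.unusedVariables false

namespace ErdosGallaiAux

variable {V : Type*}

/-- `G` has a path on `k` vertices, as a `ℕ`-indexed function. -/
def HasPath (G : SimpleGraph V) (k : ℕ) : Prop :=
  ∃ f : ℕ → V, (∀ i < k, ∀ j < k, f i = f j → i = j) ∧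
    (∀ i, i + 1 < k → G.Adj (f i) (f (i + 1)))

lemma hasPath_mono {G : SimpleGraph V} {k k' : ℕ} (h : k' ≤ k) (hp : HasPath G k) :
    HasPath G k' := by
  obtain ⟨f, h1, h2⟩ := hp
  exact ⟨f, fun i hi j hj => h1 i (lt_of_lt_of_le hi h) j (lt_of_lt_of_le hj h),
    fun i hi => h2 i (lt_of_lt_of_le hi h)⟩

lemma hasPath_of_le {G H : SimpleGraph V} (hGH : G ≤ H) {k : ℕ} (hp : HasPath G k) :
    HasPath H k := by
  obtain ⟨f, h1, h2⟩ := hp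
  exact ⟨f, h1, fun i hi => hGH (h2 i hi)⟩

lemma hasPath_two {G : SimpleGraph V} {a b : V} (hab : G.Adj a b) : HasPath G 2 := by
  refine ⟨fun m => if m = 0 then a else b, ?_, ?_⟩
  · intro i hi j hj hij
    interval_cases i <;> interval_cases j <;> simp_all [hab.ne, hab.ne']
  · intro i hi
    have : i = 0 := by omega
    subst this
    simpa using hab

/-- extension lemma: if there is no path on `k+1` vertices, every neighbor of the
initial vertex of a path on `k` vertices lies on the path. -/
lemma extend_lemma {G : SimpleGraph V} {k : ℕ} (hmax : ¬ HasPath G (k + 1)) {g : ℕ → V}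
    (hinj : ∀ i < k, ∀ j < k, g i = g j → i = j)
    (hadj : ∀ i, i + 1 < k → G.Adj (g i) (g (i + 1)))
    {w : V} (hw : G.Adj w (g 0)) : ∃ j < k, w = g j := by
  by_contra hc
  push_neg at hc
  apply hmax
  refine ⟨fun m => if m = 0 then w else g (m - 1), ?_, ?_⟩
  · intro i hi j hj hij
    by_cases hi0 : i = 0 <;> by_cases hj0 : j = 0 <;> simp [hi0, hj0] at hij ⊢
    · exact absurd hij (hc (j-1) (by omega))
    · exact absurd hij.symm (hc (i-1) (by omega))
    · have := hinj (i-1) (by omega) (j-1) (by omega) hij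
      omega
  · intro i hi
    by_cases hi0 : i = 0
    · subst hi0; simpa using hw
    · have h1 : ¬ (i + 1 = 0) := by omega
      simp only [if_neg hi0, if_neg h1]
      have h2 : i - 1 + 1 = i := by omega
      have h3 : i + 1 - 1 = i - 1 + 1 := by omega
      rw [h3, h2]
      have := hadj (i - 1) (by omega)
      rwa [h2] at this

/-- rotation lemma: if there is a path on `k` vertices whose endpoints have
"crossing chords" at position `i`, and no path on `k+1` vertices, then the
vertex set of the path is closed under neighborhoods. -/
lemma rotation {G : SimpleGraph V} {k : ℕ} (hk : 2 ≤ k)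
    (hmax : ¬ HasPath G (k + 1)) {f : ℕ → V}
    (hinj : ∀ i < k, ∀ j < k, f i = f j → i = j)
    (hadj : ∀ i, i + 1 < k → G.Adj (f i) (f (i + 1)))
    {i : ℕ} (hit : i + 1 < k)
    (hA : G.Adj (f 0) (f (i + 1))) (hB : G.Adj (f (k - 1)) (f i)) :
    ∀ u, (∃ j < k, u = f j) → ∀ w, G.Adj u w → ∃ j < k, w = f j := by
  obtain ⟨t, rfl⟩ : ∃ t, k = t + 1 := ⟨k - 1, by omega⟩
  have hti : i < t := by omega
  have hBt : G.Adj (f t) (f i) := by simpa using hB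
  set c : ℕ → V := fun j => if j ≤ i then f j else f (t + i + 1 - j) with hc
  have hceval : ∀ j ≤ t, ∃ a ≤ t, c a = f j := by
    intro j hj
    by_cases h : j ≤ i
    · exact ⟨j, by omega, by simp [hc, h]⟩
    · refine ⟨t + i + 1 - j, by omega, ?_⟩
      have h2 : ¬ (t + i + 1 - j ≤ i) := by omega
      simp only [hc, if_neg h2]
      congr 1
      omega
  have hcval : ∀ a ≤ t, ∃ j ≤ t, c a = f j := by
    intro a ha
    by_cases h : a ≤ i
    · exact ⟨a, by omega, by simp [hc, h]⟩
    · exact ⟨t + i + 1 - a, by omega, by simp [hc, if_neg h]⟩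
  have hcinj : ∀ a ≤ t, ∀ b ≤ t, c a = c b → a = b := by
    intro a ha b hb hab
    simp only [hc] at hab
    split_ifs at hab with h1 h2 h2 <;>
    · have := hinj _ (by omega) _ (by omega) hab
      omega
  have hccyc : ∀ a ≤ t, G.Adj (c a) (c ((a + 1) % (t + 1))) := by
    intro a ha
    rcases lt_trichotomy a i with h | h | h
    · have e1 : (a + 1) % (t + 1) = a + 1 := Nat.mod_eq_of_lt (by omega)
      have e2 : c a = f a := by simp only [hc]; rw [if_pos (by omega)]
      have e3 : c (a + 1) = f (a + 1) := by simp only [hc]; rw [if_pos (by omega)]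
      rw [e1, e3, e2]
      exact hadj a (by omega)
    · subst h
      have e1 : (a + 1) % (t + 1) = a + 1 := Nat.mod_eq_of_lt (by omega)
      have e2 : c a = f a := by simp only [hc]; rw [if_pos (by omega)]
      have e3 : c (a + 1) = f t := by
        simp only [hc]; rw [if_neg (by omega)]; congr 1; omega
      rw [e1, e3, e2]
      exact hBt.symm
    · by_cases hat : a = t
      · subst hat
        have e1 : (a + 1) % (a + 1) = 0 := Nat.mod_self _
        have e2 : c a = f (i + 1) := by
          simp only [hc]; rw [if_neg (by omega)]; congr 1; omega
        have e3 : c 0 = f 0 := by simp only [hc]; rw [if_pos (by omega)]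
        rw [e1, e3, e2]
        exact hA.symm
      · have e1 : (a + 1) % (t + 1) = a + 1 := Nat.mod_eq_of_lt (by omega)
        have e2 : c a = f (t + i - a + 1) := by
          simp only [hc]; rw [if_neg (by omega)]; congr 1; omega
        have e3 : c (a + 1) = f (t + i - a) := by
          simp only [hc]; rw [if_neg (by omega)]; congr 1; omega
        rw [e1, e3, e2]
        exact (hadj (t + i - a) (by omega)).symm
  intro u hu w huw
  obtain ⟨j, hj, rfl⟩ := hu
  obtain ⟨a, ha, hca⟩ := hceval j (by omega)
  have hrotinj : ∀ m < t + 1, ∀ m' < t + 1,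
      c ((a + m) % (t + 1)) = c ((a + m') % (t + 1)) → m = m' := by
    intro m hm m' hm' he
    have h1 : (a + m) % (t + 1) = (a + m') % (t + 1) :=
      hcinj _ (Nat.le_of_lt_succ (Nat.mod_lt _ (by omega))) _
        (Nat.le_of_lt_succ (Nat.mod_lt _ (by omega))) he
    have h2 : m % (t + 1) = m' % (t + 1) := Nat.ModEq.add_left_cancel' a h1
    rwa [Nat.mod_eq_of_lt hm, Nat.mod_eq_of_lt hm'] at h2
  have hrotadj : ∀ m, m + 1 < t + 1 →
      G.Adj (c ((a + m) % (t + 1))) (c ((a + m + 1) % (t + 1))) := by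
    intro m hm
    have := hccyc ((a + m) % (t + 1)) (Nat.le_of_lt_succ (Nat.mod_lt _ (by omega)))
    rwa [Nat.mod_add_mod] at this
  have hw : G.Adj w (c ((a + 0) % (t + 1))) := by
    rw [Nat.add_zero, Nat.mod_eq_of_lt (show a < t + 1 by omega), hca]
    exact huw.symm
  obtain ⟨m, hm, hwm⟩ := extend_lemma hmax
    (g := fun m => c ((a + m) % (t + 1))) hrotinj hrotadj hw
  have hwm' : w = c ((a + m) % (t + 1)) := hwm
  obtain ⟨j', hj', hcj'⟩ := hcval ((a + m) % (t + 1))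
    (Nat.le_of_lt_succ (Nat.mod_lt _ (by omega)))
  exact ⟨j', by omega, by rw [hwm', hcj']⟩

section Cut

variable [DecidableEq V]

/-- remove all edges touching `S`. -/
def cutS (G : SimpleGraph V) (S : Finset V) : SimpleGraph V where
  Adj a b := G.Adj a b ∧ a ∉ S ∧ b ∉ S
  symm := ⟨fun a b h => ⟨h.1.symm, h.2.2, h.2.1⟩⟩
  loopless := ⟨fun a h => G.loopless.irrefl a h.1⟩

instance (G : SimpleGraph V) [DecidableRel G.Adj] (S : Finset V) :
    DecidableRel (cutS G S).Adj := fun a b =>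
  inferInstanceAs (Decidable (G.Adj a b ∧ a ∉ S ∧ b ∉ S))

lemma cutS_le (G : SimpleGraph V) (S : Finset V) : cutS G S ≤ G := fun _ _ h => h.1

variable [Fintype V]

lemma edgeFinset_cutS_singleton (G : SimpleGraph V) [DecidableRel G.Adj] (v : V) :
    (cutS G {v}).edgeFinset = G.edgeFinset \ G.incidenceFinset v := by
  ext e
  refine Sym2.ind (fun a b => ?_) e
  rw [mem_edgeFinset]
  simp only [mem_edgeFinset, mem_edgeSet, Finset.mem_sdiff, mem_incidenceFinset,
    incidenceSet, Set.mem_sep_iff, Set.mem_setOf_eq, mem_edgeSet, Sym2.mem_iff, cutS,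
    Finset.mem_singleton]
  constructor
  · rintro ⟨h1, h2, h3⟩
    exact ⟨h1, fun h => (h.2.elim (fun hv => h2 hv.symm) (fun hv => h3 hv.symm))⟩
  · rintro ⟨h1, h2⟩
    refine ⟨h1, fun h => h2 ⟨h1, Or.inl h.symm⟩, fun h => h2 ⟨h1, Or.inr h.symm⟩⟩

lemma card_edgeFinset_cutS_singleton (G : SimpleGraph V) [DecidableRel G.Adj] (v : V) :
    (cutS G {v}).edgeFinset.card = G.edgeFinset.card - G.degree v := by
  rw [edgeFinset_cutS_singleton, Finset.card_sdiff_of_subset, card_incidenceFinset_eq_degree]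
  intro e he
  rw [mem_incidenceFinset] at he
  rw [mem_edgeFinset]
  exact he.1

lemma degree_le_card_edgeFinset (G : SimpleGraph V) [DecidableRel G.Adj] (v : V) :
    G.degree v ≤ G.edgeFinset.card := by
  rw [← card_incidenceFinset_eq_degree]
  apply Finset.card_le_card
  intro e he
  rw [mem_incidenceFinset] at he
  rw [mem_edgeFinset]
  exact he.1

lemma degree_cutS_of_not_mem (G : SimpleGraph V) [DecidableRel G.Adj] {S : Finset V}
    (hcl : ∀ u ∈ S, ∀ w, G.Adj u w → w ∈ S) {v : V} (hv : v ∉ S) :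
    (cutS G S).degree v = G.degree v := by
  unfold SimpleGraph.degree
  congr 1
  ext w
  simp only [mem_neighborFinset]
  constructor
  · exact fun h => h.1
  · intro h
    refine ⟨h, hv, fun hw => hv (hcl w hw v h.symm)⟩

lemma sum_deg_cut (G : SimpleGraph V) [DecidableRel G.Adj] (S : Finset V)
    (hcl : ∀ u ∈ S, ∀ w, G.Adj u w → w ∈ S) :
    2 * G.edgeFinset.card ≤ 2 * (cutS G S).edgeFinset.card + ∑ u ∈ S, G.degree u := by
  rw [← sum_degrees_eq_twice_card_edges, ← sum_degrees_eq_twice_card_edges]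
  have h1 : ∑ v ∈ S, G.degree v + ∑ v ∈ Sᶜ, G.degree v = ∑ v, G.degree v :=
    Finset.sum_add_sum_compl S _
  have h2 : ∑ v ∈ S, (cutS G S).degree v + ∑ v ∈ Sᶜ, (cutS G S).degree v
      = ∑ v, (cutS G S).degree v := Finset.sum_add_sum_compl S _
  have h3 : ∑ v ∈ Sᶜ, (cutS G S).degree v = ∑ v ∈ Sᶜ, G.degree v :=
    Finset.sum_congr rfl fun v hv =>
      degree_cutS_of_not_mem G hcl (by simpa using hv)
  have h4 : 0 ≤ ∑ v ∈ S, (cutS G S).degree v := Nat.zero_le _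
  linarith

end Cut

lemma main {V : Type*} [Fintype V] [DecidableEq V] {l : ℕ} (hl : 2 ≤ l) :
    ∀ (E : ℕ) (G : SimpleGraph V) [DecidableRel G.Adj],
      G.edgeFinset.card ≤ E → ¬ HasPath G l →
      2 * G.edgeFinset.card ≤ (l - 2) * (Finset.univ.filter fun v => 0 < G.degree v).card := by
  intro E
  induction E with
  | zero =>
    intro G _ hE _
    have h0 : G.edgeFinset.card = 0 := by omega
    rw [h0]
    exact Nat.zero_le _
  | succ E ih =>
    intro G instG hE hnp
    by_cases he0 : G.edgeFinset.card = 0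
    · rw [he0]; exact Nat.zero_le _
    have hex : ∃ a b, G.Adj a b := by
      obtain ⟨e, he⟩ := Finset.card_pos.mp (Nat.pos_of_ne_zero he0)
      revert he
      refine Sym2.ind (fun a b he => ⟨a, b, ?_⟩) e
      rw [mem_edgeFinset, mem_edgeSet] at he
      exact he
    by_cases hcase : ∃ v, 0 < G.degree v ∧ 2 * G.degree v + 2 ≤ l
    · -- a low-degree vertex exists: delete it
      obtain ⟨v, hvdeg, hvsmall⟩ := hcase
      have hE' : (cutS G {v}).edgeFinset.card = G.edgeFinset.card - G.degree v :=
        card_edgeFinset_cutS_singleton G v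
      have hdegle : G.degree v ≤ G.edgeFinset.card := degree_le_card_edgeFinset G v
      have hlt : (cutS G {v}).edgeFinset.card < G.edgeFinset.card := by omega
      have hnp' : ¬ HasPath (cutS G {v}) l := fun h => hnp (hasPath_of_le (cutS_le G _) h)
      have ihG := ih (cutS G {v}) (by omega) hnp'
      have hvsupp : v ∈ Finset.univ.filter fun u => 0 < G.degree u := by
        simp [hvdeg]
      have hsupp : (Finset.univ.filter fun u => 0 < (cutS G {v}).degree u) ⊆
          (Finset.univ.filter fun u => 0 < G.degree u).erase v := by
        intro u hu
        rw [Finset.mem_filter] at hu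
        rw [(cutS G {v}).degree_pos_iff_exists_adj] at hu
        obtain ⟨w, hw⟩ := hu.2
        rw [Finset.mem_erase, Finset.mem_filter]
        refine ⟨by simpa using hw.2.1, Finset.mem_univ _, ?_⟩
        rw [G.degree_pos_iff_exists_adj]
        exact ⟨w, hw.1⟩
      have hcards : (Finset.univ.filter fun u => 0 < (cutS G {v}).degree u).card + 1 ≤
          (Finset.univ.filter fun u => 0 < G.degree u).card := by
        have := Finset.card_le_card hsupp
        have h2 := Finset.card_erase_of_mem hvsupp
        have h3 := Finset.card_pos.mpr ⟨v, hvsupp⟩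
        omega
      calc 2 * G.edgeFinset.card
          = 2 * (cutS G {v}).edgeFinset.card + 2 * G.degree v := by omega
        _ ≤ (l - 2) * (Finset.univ.filter fun u => 0 < (cutS G {v}).degree u).card + (l - 2) :=
            add_le_add ihG (by omega)
        _ = (l - 2) * ((Finset.univ.filter fun u => 0 < (cutS G {v}).degree u).card + 1) := by
            ring
        _ ≤ (l - 2) * (Finset.univ.filter fun u => 0 < G.degree u).card :=
            Nat.mul_le_mul_left _ hcards
    · -- all vertices of positive degree have large degree
      push_neg at hcase
      have hdeg : ∀ v, 0 < G.degree v → l ≤ 2 * G.degree v + 1 := by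
        intro v hv
        have := hcase v hv
        omega
      haveI : DecidablePred (HasPath G) := Classical.decPred _
      obtain ⟨a, b, hab⟩ := hex
      have hp2 : HasPath G 2 := hasPath_two hab
      obtain ⟨k, hkge, hkl, hkP, hmax⟩ :
          ∃ k, 2 ≤ k ∧ k < l ∧ HasPath G k ∧ ¬ HasPath G (k + 1) := by
        have hkge : 2 ≤ Nat.findGreatest (HasPath G) l := Nat.le_findGreatest hl hp2
        have hkP : HasPath G (Nat.findGreatest (HasPath G) l) :=
          Nat.findGreatest_spec hl hp2
        have hkle : Nat.findGreatest (HasPath G) l ≤ l := Nat.findGreatest_le l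
        have hkl : Nat.findGreatest (HasPath G) l < l :=
          lt_of_le_of_ne hkle (fun h => hnp (h ▸ hkP))
        exact ⟨_, hkge, hkl, hkP,
          Nat.findGreatest_is_greatest (n := l) (by omega) (by omega)⟩
      obtain ⟨f, hinj, hadj⟩ := hkP
      obtain ⟨t, rfl⟩ : ∃ t, k = t + 1 := ⟨k - 1, by omega⟩
      have ht1 : 1 ≤ t := by omega
      have hdegpath : ∀ j < t + 1, 0 < G.degree (f j) := by
        intro j hj
        rw [G.degree_pos_iff_exists_adj]
        by_cases h : j + 1 < t + 1
        · exact ⟨f (j + 1), hadj j h⟩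
        · have hjt : j = t := by omega
          subst hjt
          have h2 : j - 1 + 1 = j := by omega
          have := hadj (j - 1) (by omega)
          rw [h2] at this
          exact ⟨f (j - 1), this.symm⟩
      have hnbr0 : ∀ w, G.Adj (f 0) w → ∃ j, j ≠ 0 ∧ j < t + 1 ∧ w = f j := by
        intro w hw
        obtain ⟨j, hj, hwj⟩ := extend_lemma hmax hinj hadj hw.symm
        refine ⟨j, ?_, hj, hwj⟩
        rintro rfl
        exact (G.ne_of_adj hw) hwj.symm
      have hrinj : ∀ i < t + 1, ∀ j < t + 1, f (t - i) = f (t - j) → i = j := by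
        intro i hi j hj h
        have := hinj _ (by omega) _ (by omega) h
        omega
      have hradj : ∀ i, i + 1 < t + 1 → G.Adj (f (t - i)) (f (t - (i + 1))) := by
        intro i hi
        have h2 : t - (i + 1) + 1 = t - i := by omega
        have := hadj (t - (i + 1)) (by omega)
        rw [h2] at this
        exact this.symm
      have hnbrt : ∀ w, G.Adj (f t) w → ∃ j, j < t ∧ w = f j := by
        intro w hw
        have hw0 : G.Adj w (f (t - 0)) := by simpa using hw.symm
        obtain ⟨m, hm, hwm⟩ := extend_lemma hmax
          (g := fun m => f (t - m)) hrinj hradj hw0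
        have hwm' : w = f (t - m) := hwm
        have hm0 : m ≠ 0 := by
          rintro rfl
          simp only [Nat.sub_zero] at hwm'
          exact (G.ne_of_adj hw) hwm'.symm
        exact ⟨t - m, by omega, hwm'⟩
      set A := (Finset.range t).filter (fun i => G.Adj (f 0) (f (i + 1))) with hAdef
      set B := (Finset.range t).filter (fun i => G.Adj (f t) (f i)) with hBdef
      have hcardA : A.card = G.degree (f 0) := by
        rw [← card_neighborFinset_eq_degree]
        apply Finset.card_bij (fun i _ => f (i + 1))
        · intro i hi
          rw [hAdef, Finset.mem_filter] at hi
          rw [mem_neighborFinset]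
          exact hi.2
        · intro a1 h1 a2 h2 he
          rw [hAdef, Finset.mem_filter, Finset.mem_range] at h1 h2
          have := hinj _ (by omega) _ (by omega) he
          omega
        · intro w hw
          rw [mem_neighborFinset] at hw
          obtain ⟨j, hj0, hjk, rfl⟩ := hnbr0 w hw
          refine ⟨j - 1, ?_, by congr 1; omega⟩
          rw [hAdef, Finset.mem_filter, Finset.mem_range]
          constructor
          · omega
          · rw [show j - 1 + 1 = j by omega]
            exact hw
      have hcardB : B.card = G.degree (f t) := by
        rw [← card_neighborFinset_eq_degree]
        apply Finset.card_bij (fun i _ => f i)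
        · intro i hi
          rw [hBdef, Finset.mem_filter] at hi
          rw [mem_neighborFinset]
          exact hi.2
        · intro a1 h1 a2 h2 he
          rw [hBdef, Finset.mem_filter, Finset.mem_range] at h1 h2
          exact hinj _ (by omega) _ (by omega) he
        · intro w hw
          rw [mem_neighborFinset] at hw
          obtain ⟨j, hjt, rfl⟩ := hnbrt w hw
          refine ⟨j, ?_, rfl⟩
          rw [hBdef, Finset.mem_filter, Finset.mem_range]
          exact ⟨hjt, hw⟩
      have hABcards : l - 1 ≤ A.card + B.card := by
        have h1 := hdeg (f 0) (hdegpath 0 (by omega))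
        have h2 := hdeg (f t) (hdegpath t (by omega))
        omega
      have hABn : (A ∩ B).Nonempty := by
        rw [← Finset.card_pos]
        have h1 : (A ∪ B).card ≤ t := by
          have : A ∪ B ⊆ Finset.range t :=
            Finset.union_subset (Finset.filter_subset _ _) (Finset.filter_subset _ _)
          simpa using Finset.card_le_card this
        have h2 := Finset.card_inter_add_card_union A B
        omega
      obtain ⟨i, hiAB⟩ := hABn
      rw [Finset.mem_inter, hAdef, hBdef, Finset.mem_filter, Finset.mem_filter,
        Finset.mem_range] at hiAB
      obtain ⟨⟨hit, hiA⟩, _, hiB⟩ := hiAB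
      have hBk : G.Adj (f (t + 1 - 1)) (f i) := by simpa using hiB
      have hclosed := rotation hkge hmax hinj hadj (i := i) (by omega) hiA hBk
      set S := (Finset.range (t + 1)).image f with hSdef
      have hScard : S.card = t + 1 := by
        rw [hSdef, Finset.card_image_of_injOn, Finset.card_range]
        intro x hx y hy h
        exact hinj x (Finset.mem_range.mp hx) y (Finset.mem_range.mp hy) h
      have hmemS : ∀ u, u ∈ S ↔ ∃ j < t + 1, u = f j := by
        intro u
        rw [hSdef, Finset.mem_image]
        constructor
        · rintro ⟨j, hj, rfl⟩
          exact ⟨j, Finset.mem_range.mp hj, rfl⟩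
        · rintro ⟨j, hj, rfl⟩
          exact ⟨j, Finset.mem_range.mpr hj, rfl⟩
      have hclS : ∀ u ∈ S, ∀ w, G.Adj u w → w ∈ S := fun u hu w hw =>
        (hmemS w).mpr (hclosed u ((hmemS u).mp hu) w hw)
      have hdegS : ∀ u ∈ S, G.degree u ≤ t := by
        intro u hu
        rw [← card_neighborFinset_eq_degree]
        have hsub : G.neighborFinset u ⊆ S.erase u := by
          intro w hw
          rw [mem_neighborFinset] at hw
          rw [Finset.mem_erase]
          exact ⟨(G.ne_of_adj hw).symm, hclS u hu w hw⟩
        have := Finset.card_le_card hsub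
        rw [Finset.card_erase_of_mem hu, hScard] at this
        omega
      have hsumS : ∑ u ∈ S, G.degree u ≤ (t + 1) * t := by
        calc ∑ u ∈ S, G.degree u ≤ ∑ _u ∈ S, t := Finset.sum_le_sum hdegS
          _ = (t + 1) * t := by rw [Finset.sum_const, hScard, smul_eq_mul]
      have hEcut := sum_deg_cut G S hclS
      have hmem1 : s(f 0, f 1) ∈ G.edgeFinset := by
        rw [mem_edgeFinset, mem_edgeSet]
        exact hadj 0 (by omega)
      have hmem2 : s(f 0, f 1) ∉ (cutS G S).edgeFinset := by
        rw [mem_edgeFinset, mem_edgeSet]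
        exact fun h => h.2.1 ((hmemS _).mpr ⟨0, by omega, rfl⟩)
      have hsubE : (cutS G S).edgeFinset ⊆ G.edgeFinset := by
        intro e he
        rw [mem_edgeFinset] at he ⊢
        exact edgeSet_mono (cutS_le G S) he
      have hlt : (cutS G S).edgeFinset.card < G.edgeFinset.card :=
        Finset.card_lt_card ⟨hsubE, fun h => hmem2 (h hmem1)⟩
      have hnp' : ¬ HasPath (cutS G S) l := fun h => hnp (hasPath_of_le (cutS_le G _) h)
      have ihG := ih (cutS G S) (by omega) hnp'
      have hSsupp : S ⊆ Finset.univ.filter fun u => 0 < G.degree u := by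
        intro u hu
        obtain ⟨j, hj, rfl⟩ := (hmemS u).mp hu
        rw [Finset.mem_filter]
        exact ⟨Finset.mem_univ _, hdegpath j hj⟩
      have hsupp' : (Finset.univ.filter fun u => 0 < (cutS G S).degree u) ⊆
          (Finset.univ.filter fun u => 0 < G.degree u) \ S := by
        intro u hu
        rw [Finset.mem_filter] at hu
        rw [(cutS G S).degree_pos_iff_exists_adj] at hu
        obtain ⟨w, hw⟩ := hu.2
        rw [Finset.mem_sdiff, Finset.mem_filter]
        refine ⟨⟨Finset.mem_univ _, ?_⟩, hw.2.1⟩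
        rw [G.degree_pos_iff_exists_adj]
        exact ⟨w, hw.1⟩
      have hcards : (Finset.univ.filter fun u => 0 < (cutS G S).degree u).card + (t + 1) ≤
          (Finset.univ.filter fun u => 0 < G.degree u).card := by
        have h1 := Finset.card_le_card hsupp'
        have h2 := Finset.card_sdiff_of_subset hSsupp
        have h3 := Finset.card_le_card hSsupp
        rw [hScard] at h2 h3
        omega
      have htl : t ≤ l - 2 := by omega
      calc 2 * G.edgeFinset.card
          ≤ 2 * (cutS G S).edgeFinset.card + ∑ u ∈ S, G.degree u := hEcut
        _ ≤ 2 * (cutS G S).edgeFinset.card + (t + 1) * t := by omega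
        _ ≤ (l - 2) * (Finset.univ.filter fun u => 0 < (cutS G S).degree u).card
              + (t + 1) * (l - 2) := add_le_add ihG (Nat.mul_le_mul_left _ htl)
        _ = (l - 2) * ((Finset.univ.filter fun u => 0 < (cutS G S).degree u).card
              + (t + 1)) := by ring
        _ ≤ (l - 2) * (Finset.univ.filter fun u => 0 < G.degree u).card :=
            Nat.mul_le_mul_left _ hcards

lemma subgraphOf_of_hasPath {G : SimpleGraph V} {l : ℕ} (h : HasPath G l) :
    SubgraphOf (SimpleGraph.pathGraph l) G := by
  obtain ⟨f, hinj, hadj⟩ := h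
  refine ⟨⟨fun i => f i.val, fun i j hij =>
    Fin.ext (hinj i.val i.isLt j.val j.isLt hij)⟩, ?_⟩
  intro u v huv
  have hu := u.isLt
  have hv := v.isLt
  rw [pathGraph_adj] at huv
  rcases huv with h | h
  · have := hadj u.val (by omega)
    exact (by simpa [h] using this : G.Adj (f u.val) (f v.val))
  · have := hadj v.val (by omega)
    exact (by simpa [h] using this : G.Adj (f v.val) (f u.val)).symm

end ErdosGallaiAux


/-- Erdős–Gallai: more than `(l-2)n/2` edges forces a path on `l` vertices. -/
theorem stmt_0 {V : Type*} [Fintype V] [DecidableEq V] (G : SimpleGraph V)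
    [DecidableRel G.Adj] (l : ℕ) (hl : 2 ≤ l)
    (he : (l - 2) * Fintype.card V < 2 * G.edgeFinset.card) :
    SubgraphOf (SimpleGraph.pathGraph l) G := by
  by_contra hns
  have hnp : ¬ ErdosGallaiAux.HasPath G l := fun h =>
    hns (ErdosGallaiAux.subgraphOf_of_hasPath h)
  have hmain := ErdosGallaiAux.main hl G.edgeFinset.card G le_rfl hnp
  have h2 : (Finset.univ.filter fun v => 0 < G.degree v).card ≤ Fintype.card V :=
    le_trans (Finset.card_filter_le _ _) (le_of_eq Finset.card_univ)
  have h3 := Nat.mul_le_mul_left (l - 2) h2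
  linarith
end

section
/- Let G be a connected graph with minimum degree δ(G) ≥ h ≥ 2 and a longest cycle C of length at most 2h+1. Let U = V(G)\V(C). If the induced graph G[U] contains no path on 3 vertices, then for every edge u₁u₂ of G[U] we have N(u₁) ∩ V(C) = N(u₂) ∩ V(C). -/
open SimpleGraph

namespace Helpers
variable {V : Type*} {G : SimpleGraph V}

lemma nodup_concat' {α : Type*} {l : List α} {a : α} (h1 : l.Nodup) (h2 : a ∉ l) :
    (l.concat a).Nodup := by
  rw [List.concat_eq_append, List.nodup_append]
  exact ⟨h1, List.nodup_singleton a, by simp; rintro x hx rfl; exact h2 hx⟩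

lemma getVert_concat' {u v w : V} (p : G.Walk u v) (h : G.Adj v w) (i : ℕ) :
    (p.concat h).getVert i = if i ≤ p.length then p.getVert i else w := by
  rw [Walk.concat_eq_append, Walk.getVert_append]
  by_cases h1 : i < p.length
  · rw [if_pos h1, if_pos h1.le]
  · rw [if_neg h1]
    by_cases h2 : i ≤ p.length
    · have h3 : i = p.length := le_antisymm h2 (not_lt.mp h1)
      subst h3
      simp [Walk.getVert_length]
    · rw [if_neg h2]
      exact Walk.getVert_of_length_le _ (by simp; omega)

lemma rotate_mod {v : V} {c : G.Walk v v} (hc : c.IsCycle) (i : ℕ) :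
    ∃ (a : V) (d : G.Walk a a), d.IsCycle ∧ d.length = c.length ∧
      (∀ x ∈ d.support, x ∈ c.support) ∧
      ∀ j ≤ c.length, d.getVert j = c.getVert ((i + j) % c.length) := by
  have hn3 : 3 ≤ c.length := hc.three_le_length
  induction i with
  | zero =>
    refine ⟨v, c, hc, rfl, fun x h => h, fun j hj => ?_⟩
    rcases eq_or_lt_of_le hj with h | h
    · subst h; simp [Walk.getVert_length, Nat.mod_self, Walk.getVert_zero]
    · rw [Nat.zero_add, Nat.mod_eq_of_lt h]
  | succ i ih =>
    obtain ⟨a, d, hd, hlen, hsupp, hget⟩ := ih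
    cases d with
    | nil => simp at hlen; omega
    | @cons _ b _ hab t =>
      have htlen : t.length = c.length - 1 := by
        simp [Walk.length_cons] at hlen; omega
      have htnodup : t.support.Nodup := by
        have := hd.support_nodup
        rwa [Walk.support_cons, List.tail_cons] at this
      have hednodup : s(a, b) ∉ t.edges ∧ t.edges.Nodup := by
        have := hd.isTrail.edges_nodup
        rwa [Walk.edges_cons, List.nodup_cons] at this
      refine ⟨b, t.concat hab, ⟨⟨⟨?_⟩, ?_⟩, ?_⟩, ?_, ?_, ?_⟩
      · rw [Walk.edges_concat]
        exact nodup_concat' hednodup.2 hednodup.1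
      · intro hnil
        have := congrArg Walk.length hnil
        simp [Walk.length_concat] at this
      · rw [Walk.support_concat, t.support_eq_cons,
          List.cons_append, List.tail_cons]
        rw [t.support_eq_cons, List.nodup_cons] at htnodup
        rw [← List.concat_eq_append]
        exact nodup_concat' htnodup.2 htnodup.1
      · rw [Walk.length_concat]; omega
      · intro x hx
        rw [Walk.support_concat, List.mem_append] at hx
        apply hsupp
        rw [Walk.support_cons]
        rcases hx with hx | hx
        · exact List.mem_cons_of_mem _ hx
        · simp at hx
          subst hx
          exact List.mem_cons_of_mem _ t.start_mem_support
      · intro j hj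
        rw [getVert_concat']
        by_cases hjl : j ≤ t.length
        · rw [if_pos hjl]
          have h1 : t.getVert j = (Walk.cons hab t).getVert (j + 1) :=
            (Walk.getVert_cons_succ t hab).symm
          rw [h1, hget (j + 1) (by omega)]
          have : i + (j + 1) = i + 1 + j := by omega
          rw [this]
        · rw [if_neg hjl]
          have hj' : j = c.length := by omega
          subst hj'
          have h1 : b = (Walk.cons hab t).getVert 1 := by
            rw [Walk.getVert_cons_succ]; simp
          rw [h1, hget 1 (by omega)]
          have : i + 1 + c.length = (i + 1) + c.length := rfl
          rw [this, Nat.add_mod_right]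


variable {V : Type*} {G : SimpleGraph V}

lemma nodup_concat'' {α : Type*} {l : List α} {a : α} (h1 : l.Nodup) (h2 : a ∉ l) :
    (l.concat a).Nodup := by
  rw [List.concat_eq_append, List.nodup_append]
  exact ⟨h1, List.nodup_singleton a, by simp; rintro x hx rfl; exact h2 hx⟩

/-- Insert one outside vertex `u` between the endpoints of a path `q : Walk y a`. -/
lemma ins1 {y a u : V} (q : G.Walk y a) (hs : q.support.Nodup) (he : q.edges.Nodup)
    (hu : u ∉ q.support) (h1 : G.Adj a u) (h2 : G.Adj u y) (hay : a ≠ y) :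
    ∃ (w : V) (d : G.Walk w w), d.IsCycle ∧ d.length = q.length + 2 := by
  have hy : y ∈ q.support := q.start_mem_support
  have ha : a ∈ q.support := q.end_mem_support
  refine ⟨u, Walk.cons h2 (q.concat h1), ⟨⟨⟨?_⟩, ?_⟩, ?_⟩, ?_⟩
  · rw [Walk.edges_cons, Walk.edges_concat, List.nodup_cons]
    constructor
    · intro hmem
      rw [List.concat_eq_append, List.mem_append] at hmem
      rcases hmem with hmem | hmem
      · exact hu (Walk.fst_mem_support_of_mem_edges q hmem)
      · simp only [List.mem_singleton, Sym2.eq, Sym2.rel_iff', Prod.mk.injEq,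
          Prod.swap_prod_mk] at hmem
        rcases hmem with ⟨h', h''⟩ | ⟨h', h''⟩
        · exact hu (h'' ▸ hy)
        · exact hay h''.symm
    · refine nodup_concat'' he ?_
      intro hmem
      exact hu (Walk.snd_mem_support_of_mem_edges q hmem)
  · intro hnil
    have := congrArg Walk.length hnil
    simp [Walk.length_cons] at this
  · rw [Walk.support_cons, List.tail_cons, Walk.support_concat, ← List.concat_eq_append]
    exact nodup_concat'' hs hu
  · simp [Walk.length_cons, Walk.length_concat]

/-- Insert two outside adjacent vertices `u₁ u₂` between the endpoints of `q : Walk y a`. -/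
lemma ins2 {y a u₁ u₂ : V} (q : G.Walk y a) (hs : q.support.Nodup) (he : q.edges.Nodup)
    (hu1 : u₁ ∉ q.support) (hu2 : u₂ ∉ q.support) (h12 : u₁ ≠ u₂)
    (h1 : G.Adj a u₁) (h2 : G.Adj u₁ u₂) (h3 : G.Adj u₂ y) :
    ∃ (w : V) (d : G.Walk w w), d.IsCycle ∧ d.length = q.length + 3 := by
  have hy : y ∈ q.support := q.start_mem_support
  have ha : a ∈ q.support := q.end_mem_support
  refine ⟨u₁, Walk.cons h2 (Walk.cons h3 (q.concat h1)), ⟨⟨⟨?_⟩, ?_⟩, ?_⟩, ?_⟩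
  · rw [Walk.edges_cons, Walk.edges_cons, Walk.edges_concat, List.nodup_cons, List.nodup_cons]
    refine ⟨?_, ?_, ?_⟩
    · intro hmem
      rw [List.concat_eq_append, List.mem_cons, List.mem_append, List.mem_singleton] at hmem
      rcases hmem with h' | hmem | h'
      · rw [Sym2.eq_iff] at h'
        rcases h' with ⟨h1', h2'⟩ | ⟨h1', h2'⟩ <;> subst_vars
        · exact h12 rfl
        · exact hu1 q.start_mem_support
      · exact hu1 (Walk.fst_mem_support_of_mem_edges q hmem)
      · rw [Sym2.eq_iff] at h'
        rcases h' with ⟨h1', h2'⟩ | ⟨h1', h2'⟩ <;> subst_vars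
        · exact h12 rfl
        · exact hu2 q.end_mem_support
    · intro hmem
      rw [List.concat_eq_append, List.mem_append, List.mem_singleton] at hmem
      rcases hmem with hmem | h'
      · exact hu2 (Walk.fst_mem_support_of_mem_edges q hmem)
      · rw [Sym2.eq_iff] at h'
        rcases h' with ⟨h1', h2'⟩ | ⟨h1', h2'⟩ <;> subst_vars
        · exact hu2 q.end_mem_support
        · exact h12 rfl
    · refine nodup_concat'' he ?_
      intro hmem
      exact hu1 (Walk.snd_mem_support_of_mem_edges q hmem)
  · intro hnil
    have := congrArg Walk.length hnil
    simp [Walk.length_cons] at this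
  · rw [Walk.support_cons, List.tail_cons, Walk.support_cons, Walk.support_concat]
    rw [List.nodup_cons]
    constructor
    · simp only [List.mem_append, List.mem_singleton]
      rintro (hmem | rfl)
      · exact hu2 hmem
      · exact h12 rfl
    · rw [← List.concat_eq_append]
      exact nodup_concat'' hs hu1
  · simp [Walk.length_cons, Walk.length_concat]

end Helpers

theorem stmt_7 {V : Type*} [Fintype V] [DecidableEq V] (G : SimpleGraph V)
    [DecidableRel G.Adj] (h : ℕ) (hh : 2 ≤ h) (hconn : G.Connected)
    (hδ : ∀ v, h ≤ G.degree v)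
    (v : V) (c : G.Walk v v) (hc : c.IsCycle)
    (hlong : ∀ (w : V) (d : G.Walk w w), d.IsCycle → d.length ≤ c.length)
    (hlen : c.length ≤ 2 * h + 1)
    (hP3 : ¬ SubgraphOf (SimpleGraph.pathGraph 3) (G.induce {x | x ∉ c.support})) :
    ∀ u₁ u₂, u₁ ∉ c.support → u₂ ∉ c.support → G.Adj u₁ u₂ →
      {x | x ∈ c.support ∧ G.Adj u₁ x} = {x | x ∈ c.support ∧ G.Adj u₂ x} := by
  have hn3 : 3 ≤ c.length := hc.three_le_length
  haveI : NeZero c.length := ⟨by omega⟩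
  haveI : Fact (1 < c.length) := ⟨by omega⟩
  suffices key : ∀ w₁ w₂, w₁ ∉ c.support → w₂ ∉ c.support → G.Adj w₁ w₂ →
      ∀ x ∈ c.support, G.Adj w₁ x → G.Adj w₂ x by
    intro u₁ u₂ h1 h2 hadj
    ext x
    simp only [Set.mem_setOf_eq]
    constructor
    · rintro ⟨hx, ha⟩
      exact ⟨hx, key u₁ u₂ h1 h2 hadj x hx ha⟩
    · rintro ⟨hx, ha⟩
      exact ⟨hx, key u₂ u₁ h2 h1 hadj.symm x hx ha⟩
  intro w₁ w₂ hw1 hw2 hadj x hxsupp hadj1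
  by_contra hnadj2
  set n := c.length with hn
  -- the cyclic parametrization
  set g : ZMod n → V := fun z => c.getVert z.val with hg
  have hval1 : ∀ z : ZMod n, (z + 1).val = (z.val + 1) % n := by
    intro z
    rw [ZMod.val_add, ZMod.val_one]
  have hval2 : ∀ z : ZMod n, (z + 2).val = (z.val + 2) % n := by
    intro z
    rw [ZMod.val_add]
    congr 2
    have : (2 : ZMod n) = ((2 : ℕ) : ZMod n) := by push_cast; ring
    rw [this, ZMod.val_natCast, Nat.mod_eq_of_lt (by omega)]
  have hgsupp : ∀ z : ZMod n, g z ∈ c.support := fun z =>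
    Walk.mem_support_iff_exists_getVert.mpr ⟨z.val, rfl, z.val_lt.le⟩
  have hsurj : ∀ y ∈ c.support, ∃ z, g z = y := by
    intro y hy
    rw [Walk.mem_support_iff_exists_getVert] at hy
    obtain ⟨k, hk, hkle⟩ := hy
    refine ⟨(k : ZMod n), ?_⟩
    rw [hg]
    simp only [ZMod.val_natCast]
    rcases eq_or_lt_of_le hkle with hkn | hkn
    · rw [hkn, Nat.mod_self, Walk.getVert_zero, ← hk, hkn, Walk.getVert_length]
    · rwa [Nat.mod_eq_of_lt hkn]
  -- ℕ-level gap lemmas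
  have gap1 : ∀ (w : V), w ∉ c.support → ∀ i : ℕ, G.Adj w (c.getVert (i % n)) →
      G.Adj w (c.getVert ((i + 1) % n)) → False := by
    intro w hw i hadja hadjb
    obtain ⟨a, d, hd, hdlen, hdsupp, hdget⟩ := Helpers.rotate_mod hc i
    rw [← hn] at hdlen hdget
    cases d with
    | nil => rw [Walk.length_nil] at hdlen; omega
    | @cons _ b _ hab t =>
      have ha : a = c.getVert (i % n) := by
        have := hdget 0 (by omega)
        rwa [Walk.getVert_zero, Nat.add_zero] at this
      have hb : b = c.getVert ((i + 1) % n) := by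
        have := hdget 1 (by omega)
        rwa [Walk.getVert_cons_succ, Walk.getVert_zero] at this
      have htsupp : t.support.Nodup := by
        have := hd.support_nodup
        rwa [Walk.support_cons, List.tail_cons] at this
      have hed : t.edges.Nodup := by
        have := hd.isTrail.edges_nodup
        rw [Walk.edges_cons, List.nodup_cons] at this
        exact this.2
      have hwsup : w ∉ t.support := fun hmem =>
        hw (hdsupp w (by rw [Walk.support_cons]; exact List.mem_cons_of_mem _ hmem))
      have h1 : G.Adj a w := by rw [ha]; exact hadja.symm
      have h2 : G.Adj w b := by rw [hb]; exact hadjb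
      obtain ⟨w', d', hcyc', hlen'⟩ := Helpers.ins1 t htsupp hed hwsup h1 h2 hab.ne
      have hle := hlong w' d' hcyc'
      rw [Walk.length_cons] at hdlen
      omega
  have gap1' : ∀ (w w' : V), w ∉ c.support → w' ∉ c.support → w ≠ w' → G.Adj w w' →
      ∀ i : ℕ, G.Adj w (c.getVert (i % n)) → G.Adj w' (c.getVert ((i + 1) % n)) → False := by
    intro w w' hw hw' hne hww' i hadja hadjb
    obtain ⟨a, d, hd, hdlen, hdsupp, hdget⟩ := Helpers.rotate_mod hc i
    rw [← hn] at hdlen hdget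
    cases d with
    | nil => rw [Walk.length_nil] at hdlen; omega
    | @cons _ b _ hab t =>
      have ha : a = c.getVert (i % n) := by
        have := hdget 0 (by omega)
        rwa [Walk.getVert_zero, Nat.add_zero] at this
      have hb : b = c.getVert ((i + 1) % n) := by
        have := hdget 1 (by omega)
        rwa [Walk.getVert_cons_succ, Walk.getVert_zero] at this
      have htsupp : t.support.Nodup := by
        have := hd.support_nodup
        rwa [Walk.support_cons, List.tail_cons] at this
      have hed : t.edges.Nodup := by
        have := hd.isTrail.edges_nodup
        rw [Walk.edges_cons, List.nodup_cons] at this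
        exact this.2
      have hwsup : w ∉ t.support := fun hmem =>
        hw (hdsupp w (by rw [Walk.support_cons]; exact List.mem_cons_of_mem _ hmem))
      have hwsup' : w' ∉ t.support := fun hmem =>
        hw' (hdsupp w' (by rw [Walk.support_cons]; exact List.mem_cons_of_mem _ hmem))
      have h1 : G.Adj a w := by rw [ha]; exact hadja.symm
      have h3 : G.Adj w' b := by rw [hb]; exact hadjb
      obtain ⟨w'', d', hcyc', hlen'⟩ := Helpers.ins2 t htsupp hed hwsup hwsup' hne h1 hww' h3
      have hle := hlong w'' d' hcyc'
      rw [Walk.length_cons] at hdlen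
      omega
  have gap2 : ∀ (w w' : V), w ∉ c.support → w' ∉ c.support → w ≠ w' → G.Adj w w' →
      ∀ i : ℕ, G.Adj w (c.getVert (i % n)) → G.Adj w' (c.getVert ((i + 2) % n)) → False := by
    intro w w' hw hw' hne hww' i hadja hadjb
    obtain ⟨a, d, hd, hdlen, hdsupp, hdget⟩ := Helpers.rotate_mod hc i
    rw [← hn] at hdlen hdget
    cases d with
    | nil => rw [Walk.length_nil] at hdlen; omega
    | @cons _ b _ hab t =>
      cases t with
      | nil => rw [Walk.length_cons, Walk.length_nil] at hdlen; omega
      | @cons _ b2 _ hbc t2 =>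
        have ha : a = c.getVert (i % n) := by
          have := hdget 0 (by omega)
          rwa [Walk.getVert_zero, Nat.add_zero] at this
        have hb2 : b2 = c.getVert ((i + 2) % n) := by
          have := hdget 2 (by omega)
          rwa [Walk.getVert_cons_succ, Walk.getVert_cons_succ, Walk.getVert_zero] at this
        have htsupp : t2.support.Nodup := by
          have := hd.support_nodup
          rw [Walk.support_cons, List.tail_cons, Walk.support_cons, List.nodup_cons] at this
          exact this.2
        have hed : t2.edges.Nodup := by
          have := hd.isTrail.edges_nodup
          rw [Walk.edges_cons, Walk.edges_cons, List.nodup_cons, List.nodup_cons] at this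
          exact this.2.2
        have hsub2 : ∀ y, y ∈ t2.support → y ∈ c.support := by
          intro y hy
          apply hdsupp
          rw [Walk.support_cons, Walk.support_cons]
          exact List.mem_cons_of_mem _ (List.mem_cons_of_mem _ hy)
        have hwsup : w ∉ t2.support := fun hmem => hw (hsub2 w hmem)
        have hwsup' : w' ∉ t2.support := fun hmem => hw' (hsub2 w' hmem)
        have h1 : G.Adj a w := by rw [ha]; exact hadja.symm
        have h3 : G.Adj w' b2 := by rw [hb2]; exact hadjb
        obtain ⟨w'', d', hcyc', hlen'⟩ := Helpers.ins2 t2 htsupp hed hwsup hwsup' hne h1 hww' h3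
        have hle := hlong w'' d' hcyc'
        rw [Walk.length_cons, Walk.length_cons] at hdlen
        omega
  -- ZMod versions
  have hmod : ∀ z : ZMod n, z.val % n = z.val := fun z => Nat.mod_eq_of_lt z.val_lt
  have zg1 : ∀ (w w' : V), w ∉ c.support → w' ∉ c.support → G.Adj w w' →
      ∀ z : ZMod n, (w = w' ∨ w ≠ w') → True := fun _ _ _ _ _ _ _ => trivial
  -- adjacency position sets
  set A : Finset (ZMod n) := Finset.univ.filter (fun z => G.Adj w₁ (g z)) with hA
  set B : Finset (ZMod n) := Finset.univ.filter (fun z => G.Adj w₂ (g z)) with hB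
  have hmemA : ∀ z, z ∈ A ↔ G.Adj w₁ (g z) := by
    intro z; rw [hA, Finset.mem_filter]; simp
  have hmemB : ∀ z, z ∈ B ↔ G.Adj w₂ (g z) := by
    intro z; rw [hB, Finset.mem_filter]; simp
  -- zS : no two (cyclically) consecutive positions in A ∪ B
  have zS : ∀ z : ZMod n, z ∈ A ∪ B → z + 1 ∈ A ∪ B → False := by
    intro z hz hz1
    rw [Finset.mem_union, hmemA, hmemB] at hz hz1
    have e1 : g z = c.getVert (z.val % n) := by rw [hmod]
    have e2 : g (z + 1) = c.getVert ((z.val + 1) % n) := by rw [hg]; simp only; rw [hval1]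
    rcases hz with hz | hz <;> rcases hz1 with hz1 | hz1
    · exact gap1 w₁ hw1 z.val (e1 ▸ hz) (e2 ▸ hz1)
    · exact gap1' w₁ w₂ hw1 hw2 hadj.ne hadj z.val (e1 ▸ hz) (e2 ▸ hz1)
    · exact gap1' w₂ w₁ hw2 hw1 hadj.ne.symm hadj.symm z.val (e1 ▸ hz) (e2 ▸ hz1)
    · exact gap1 w₂ hw2 z.val (e1 ▸ hz) (e2 ▸ hz1)
  have zf2a : ∀ z : ZMod n, z ∈ A → z + 2 ∈ B → False := by
    intro z hz hz2
    rw [hmemA] at hz; rw [hmemB] at hz2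
    have e1 : g z = c.getVert (z.val % n) := by rw [hmod]
    have e2 : g (z + 2) = c.getVert ((z.val + 2) % n) := by rw [hg]; simp only; rw [hval2]
    exact gap2 w₁ w₂ hw1 hw2 hadj.ne hadj z.val (e1 ▸ hz) (e2 ▸ hz2)
  have zf2b : ∀ z : ZMod n, z ∈ B → z + 2 ∈ A → False := by
    intro z hz hz2
    rw [hmemB] at hz; rw [hmemA] at hz2
    have e1 : g z = c.getVert (z.val % n) := by rw [hmod]
    have e2 : g (z + 2) = c.getVert ((z.val + 2) % n) := by rw [hg]; simp only; rw [hval2]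
    exact gap2 w₂ w₁ hw2 hw1 hadj.ne.symm hadj.symm z.val (e1 ▸ hz) (e2 ▸ hz2)
  -- degree lower bounds
  have hdeg : ∀ (wa wb : V), wa ∉ c.support → wb ∉ c.support → G.Adj wa wb →
      h - 1 ≤ (Finset.univ.filter (fun z : ZMod n => G.Adj wa (g z))).card := by
    intro wa wb hwa hwb hab
    have hsub : G.neighborFinset wa ⊆
        (Finset.univ.filter (fun z : ZMod n => G.Adj wa (g z))).image g ∪ {wb} := by
      intro y hy
      rw [SimpleGraph.mem_neighborFinset] at hy
      by_cases hyc : y ∈ c.support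
      · obtain ⟨z, hz⟩ := hsurj y hyc
        refine Finset.mem_union_left _ ?_
        rw [Finset.mem_image]
        exact ⟨z, Finset.mem_filter.mpr ⟨Finset.mem_univ _, by rw [hz]; exact hy⟩, hz⟩
      · have hywb : y = wb := by
          by_contra hne
          apply hP3
          refine ⟨⟨![⟨y, hyc⟩, ⟨wa, hwa⟩, ⟨wb, hwb⟩], ?_⟩, ?_⟩
          · intro a b hab'
            fin_cases a <;> fin_cases b <;>
              simp only [Matrix.cons_val_zero, Matrix.cons_val_one, Matrix.head_cons,
                Matrix.cons_val_two, Matrix.tail_cons, Fin.mk_zero, Fin.mk_one] at hab' ⊢ <;>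
              first
                | rfl
                | (have hval := congrArg Subtype.val hab'
                   simp only at hval
                   first
                     | exact absurd hval hy.ne'
                     | exact absurd hval.symm hy.ne'
                     | exact absurd hval hab.ne
                     | exact absurd hval.symm hab.ne
                     | exact absurd hval hne
                     | exact absurd hval.symm hne)
          · intro a b hab'
            rw [pathGraph_adj] at hab'
            fin_cases a <;> fin_cases b <;>
              simp only [Fin.isValue, Fin.val_zero, Fin.val_one, Fin.val_two,
                Fin.mk_zero, Fin.mk_one] at hab' <;>
              first
                | omega
                | (simp only [Matrix.cons_val_zero, Matrix.cons_val_one, Matrix.head_cons,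
                     Matrix.cons_val_two, Matrix.tail_cons]
                   first
                     | exact hy.symm
                     | exact hy
                     | exact hab
                     | exact hab.symm)
        subst hywb
        exact Finset.mem_union_right _ (Finset.mem_singleton_self _)
    have hcard := Finset.card_le_card hsub
    have hdg : h ≤ (G.neighborFinset wa).card := hδ wa
    have h1' := Finset.card_union_le
      ((Finset.univ.filter (fun z : ZMod n => G.Adj wa (g z))).image g) ({wb} : Finset V)
    have h2' := Finset.card_image_le
      (s := Finset.univ.filter (fun z : ZMod n => G.Adj wa (g z))) (f := g)
    rw [Finset.card_singleton] at h1'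
    omega
  have hcardA : h - 1 ≤ A.card := hdeg w₁ w₂ hw1 hw2 hadj
  have hcardB : h - 1 ≤ B.card := hdeg w₂ w₁ hw2 hw1 hadj.symm
  -- the distinguished position
  obtain ⟨px, hpx⟩ := hsurj x hxsupp
  have hpxA : px ∈ A := by rw [hmemA, hpx]; exact hadj1
  have hpxB : px ∉ B := by rw [hmemB, hpx]; exact hnadj2
  -- counting
  set S : Finset (ZMod n) := A ∪ B with hS
  set S1 : Finset (ZMod n) := S.image (· + 1) with hS1
  have hS1card : S1.card = S.card :=
    Finset.card_image_of_injective _ (add_left_injective 1)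
  have hSdisj : Disjoint S S1 := by
    rw [Finset.disjoint_right]
    intro z hz1 hz
    rw [hS1, Finset.mem_image] at hz1
    obtain ⟨s, hs, hsz⟩ := hz1
    exact zS s hs (by rwa [hsz])
  have hcard2 : S.card + S1.card ≤ n := by
    calc S.card + S1.card = (S ∪ S1).card := (Finset.card_union_of_disjoint hSdisj).symm
    _ ≤ Fintype.card (ZMod n) := Finset.card_le_univ _
    _ = n := ZMod.card n
  have hnotS1 : ∀ z : ZMod n, z ∈ S → z + 1 ∉ S1 → True := fun _ _ _ => trivial
  by_cases hzint : ∃ z, z ∈ A ∧ z ∈ B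
  · -- Case 1 : common position
    obtain ⟨z, hzA, hzB⟩ := hzint
    have hkS : h ≤ S.card := by
      have hsub : insert px B ⊆ S := by
        intro y hy
        rw [Finset.mem_insert] at hy
        rcases hy with rfl | hy
        · exact Finset.mem_union_left _ hpxA
        · exact Finset.mem_union_right _ hy
      have := Finset.card_le_card hsub
      rw [Finset.card_insert_of_notMem hpxB] at this
      omega
    have hn4 : 4 ≤ n := by omega
    have hne3 : z + 2 ≠ z - 1 := by
      intro he
      have h3 : ((3 : ℕ) : ZMod n) = 0 := by
        have h' := sub_eq_zero_of_eq he
        rw [show z + 2 - (z - 1) = 3 by ring] at h'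
        rw [show ((3 : ℕ) : ZMod n) = (3 : ZMod n) by push_cast; ring]
        exact h'
      rw [ZMod.natCast_eq_zero_iff] at h3
      have := Nat.le_of_dvd (by norm_num) h3
      omega
    have hz2S : z + 2 ∉ S := by
      rw [hS, Finset.mem_union]
      rintro (hm | hm)
      · exact zf2b z hzB hm
      · exact zf2a z hzA hm
    have hz2S1 : z + 2 ∉ S1 := by
      rw [hS1, Finset.mem_image]
      rintro ⟨s, hs, hsz⟩
      have : s = z + 1 := by
        have := congrArg (· - 1) hsz
        simp only [add_sub_cancel_right] at this
        rw [this]; ring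
      subst this
      exact zS z (Finset.mem_union_left _ hzA) hs
    have hzmS : z - 1 ∉ S := by
      intro hm
      refine zS (z - 1) hm ?_
      rw [sub_add_cancel]
      exact Finset.mem_union_left _ hzA
    have hzmS1 : z - 1 ∉ S1 := by
      rw [hS1, Finset.mem_image]
      rintro ⟨s, hs, hsz⟩
      have hsz' : s = z - 2 := by
        have := congrArg (· - 1) hsz
        simp only [add_sub_cancel_right] at this
        rw [this]; ring
      subst hsz'
      have hs2 : z - 2 + 2 = z := by ring
      rw [hS, Finset.mem_union] at hs
      rcases hs with hs | hs
      · exact zf2a (z - 2) hs (by rwa [hs2])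
      · exact zf2b (z - 2) hs (by rwa [hs2])
    -- final count
    have hpairdisj : Disjoint (S ∪ S1) {z + 2, z - 1} := by
      rw [Finset.disjoint_right]
      intro y hy hyu
      rw [Finset.mem_insert, Finset.mem_singleton] at hy
      rw [Finset.mem_union] at hyu
      rcases hy with rfl | rfl <;> rcases hyu with hyu | hyu <;> tauto
    have hfinal : (S ∪ S1 ∪ {z + 2, z - 1}).card ≤ n := by
      calc (S ∪ S1 ∪ {z + 2, z - 1}).card ≤ Fintype.card (ZMod n) := Finset.card_le_univ _
      _ = n := ZMod.card n
    rw [Finset.card_union_of_disjoint hpairdisj, Finset.card_union_of_disjoint hSdisj,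
      Finset.card_pair hne3] at hfinal
    omega
  · -- Case 2 : A and B disjoint
    push_neg at hzint
    have hABdisj : Disjoint A B := by
      rw [Finset.disjoint_left]
      exact hzint
    have hcardS : S.card = A.card + B.card := Finset.card_union_of_disjoint hABdisj
    have hBne : B.Nonempty := Finset.card_pos.mp (by omega)
    have hAne : A.Nonempty := Finset.card_pos.mp (by omega)
    have hexB : ∃ b ∈ B, b + 2 ∉ B := by
      by_contra hcl
      push_neg at hcl
      obtain ⟨b0, hb0⟩ := hBne
      have hiter : ∀ t : ℕ, b0 + ((2 * t : ℕ) : ZMod n) ∈ B := by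
        intro t
        induction t with
        | zero => simpa using hb0
        | succ t ih =>
          have he : b0 + ((2 * (t + 1) : ℕ) : ZMod n) = (b0 + ((2 * t : ℕ) : ZMod n)) + 2 := by
            push_cast; ring
          rw [he]
          exact hcl _ ih
      have hp1 : px + 1 ∉ B := by
        intro hm
        exact zS px (Finset.mem_union_left _ hpxA) (Finset.mem_union_right _ hm)
      have hmc : (((px - b0).val : ℕ) : ZMod n) = px - b0 := ZMod.natCast_zmod_val _
      rcases Nat.even_or_odd (px - b0).val with hev | hod
      · obtain ⟨t, ht⟩ := hev
        have he : b0 + ((2 * t : ℕ) : ZMod n) = px := by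
          rw [show 2 * t = (px - b0).val by omega, hmc]; ring
        exact hpxB (he ▸ hiter t)
      · obtain ⟨t, ht⟩ := hod
        have hcast : ((2 * (t + 1) : ℕ) : ZMod n) = (px - b0) + 1 := by
          rw [show 2 * (t + 1) = (px - b0).val + 1 by omega]
          push_cast
          rw [hmc]
        have he : b0 + ((2 * (t + 1) : ℕ) : ZMod n) = px + 1 := by rw [hcast]; ring
        exact hp1 (he ▸ hiter (t + 1))
    have hexA : ∃ a ∈ A, a + 2 ∉ A := by
      by_contra hcl
      push_neg at hcl
      obtain ⟨a0, ha0⟩ := hAne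
      obtain ⟨b1, hb1⟩ := hBne
      have hiter : ∀ t : ℕ, a0 + ((2 * t : ℕ) : ZMod n) ∈ A := by
        intro t
        induction t with
        | zero => simpa using ha0
        | succ t ih =>
          have he : a0 + ((2 * (t + 1) : ℕ) : ZMod n) = (a0 + ((2 * t : ℕ) : ZMod n)) + 2 := by
            push_cast; ring
          rw [he]
          exact hcl _ ih
      have hb1A : b1 ∉ A := fun hm => hzint b1 hm hb1
      have hp1 : b1 + 1 ∉ A := by
        intro hm
        exact zS b1 (Finset.mem_union_right _ hb1) (Finset.mem_union_left _ hm)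
      have hmc : (((b1 - a0).val : ℕ) : ZMod n) = b1 - a0 := ZMod.natCast_zmod_val _
      rcases Nat.even_or_odd (b1 - a0).val with hev | hod
      · obtain ⟨t, ht⟩ := hev
        have he : a0 + ((2 * t : ℕ) : ZMod n) = b1 := by
          rw [show 2 * t = (b1 - a0).val by omega, hmc]; ring
        exact hb1A (he ▸ hiter t)
      · obtain ⟨t, ht⟩ := hod
        have hcast : ((2 * (t + 1) : ℕ) : ZMod n) = (b1 - a0) + 1 := by
          rw [show 2 * (t + 1) = (b1 - a0).val + 1 by omega]
          push_cast
          rw [hmc]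
        have he : a0 + ((2 * (t + 1) : ℕ) : ZMod n) = b1 + 1 := by rw [hcast]; ring
        exact hp1 (he ▸ hiter (t + 1))
    obtain ⟨b, hbB, hb2B⟩ := hexB
    obtain ⟨a, haA, ha2A⟩ := hexA
    have hp1S : b + 2 ∉ S := by
      rw [hS, Finset.mem_union]
      rintro (hm | hm)
      · exact zf2b b hbB hm
      · exact hb2B hm
    have hp1S1 : b + 2 ∉ S1 := by
      rw [hS1, Finset.mem_image]
      rintro ⟨s, hs, hsz⟩
      have hsb : s = b + 1 := by
        have := congrArg (· - 1) hsz
        simp only [add_sub_cancel_right] at this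
        rw [this]; ring
      subst hsb
      exact zS b (Finset.mem_union_right _ hbB) hs
    have hp2S : a + 2 ∉ S := by
      rw [hS, Finset.mem_union]
      rintro (hm | hm)
      · exact ha2A hm
      · exact zf2a a haA hm
    have hp2S1 : a + 2 ∉ S1 := by
      rw [hS1, Finset.mem_image]
      rintro ⟨s, hs, hsz⟩
      have hsa : s = a + 1 := by
        have := congrArg (· - 1) hsz
        simp only [add_sub_cancel_right] at this
        rw [this]; ring
      subst hsa
      exact zS a (Finset.mem_union_left _ haA) hs
    have hne12 : b + 2 ≠ a + 2 := by
      intro he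
      have hba : b = a := by
        have := congrArg (· - 2) he
        simp only [add_sub_cancel_right] at this
        exact this
      subst hba
      exact hzint b haA hbB
    have hpairdisj : Disjoint (S ∪ S1) {b + 2, a + 2} := by
      rw [Finset.disjoint_right]
      intro y hy hyu
      rw [Finset.mem_insert, Finset.mem_singleton] at hy
      rw [Finset.mem_union] at hyu
      rcases hy with rfl | rfl <;> rcases hyu with hyu | hyu <;> tauto
    have hfinal : (S ∪ S1 ∪ {b + 2, a + 2}).card ≤ n := by
      calc (S ∪ S1 ∪ {b + 2, a + 2}).card ≤ Fintype.card (ZMod n) := Finset.card_le_univ _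
      _ = n := ZMod.card n
    rw [Finset.card_union_of_disjoint hpairdisj, Finset.card_union_of_disjoint hSdisj,
      Finset.card_pair hne12] at hfinal
    omega
end

section
/- Let H = (X,Y;E) be the complete bipartite graph with |X| = h and |Y| = h+2, and let G be obtained from H and a path P_4 by identifying a vertex u ∈ X with one endpoint of P_4. Let a₁ ≥ ... ≥ a_k ≥ 1 (k ≥ 0) and b₁ ≥ b₂ ≥ 1 be integers with Σaᵢ + b₁ + b₂ - 1 = h ≥ 2. Then G contains the disjoint union of paths P_{2a₁} ∪ ... ∪ P_{2a_k} ∪ P_{2b₁+1} ∪ P_{2b₂+1} as a subgraph. -/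
open SimpleGraph

set_option maxHeartbeats 1000000


namespace Stmt9Helper

def pre {k : ℕ} (a : Fin k → ℕ) (n : ℕ) : ℕ :=
  ∑ j ∈ Finset.range n, if hj : j < k then a ⟨j, hj⟩ else 0

lemma pre_mono {k : ℕ} (a : Fin k → ℕ) : Monotone (pre a) := fun _ _ hmn =>
  Finset.sum_le_sum_of_subset (Finset.range_subset_range.2 hmn)

lemma pre_succ {k : ℕ} (a : Fin k → ℕ) (i : Fin k) :
    pre a (i.val + 1) = pre a i.val + a i := by
  unfold pre
  rw [Finset.sum_range_succ, dif_pos i.isLt]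

lemma pre_top {k : ℕ} (a : Fin k → ℕ) : pre a k = ∑ i, a i := by
  unfold pre
  rw [Finset.sum_range]
  exact Finset.sum_congr rfl fun i _ => dif_pos i.isLt

def slotFn {k : ℕ} (p : ℕ → ℕ) (A b0 hm : ℕ) : (Fin k ⊕ Fin 2) → ℕ → (ℕ ⊕ ℕ ⊕ ℕ) :=
  fun i t =>
    match i with
    | Sum.inl i =>
        if t % 2 = 0 then .inl (p i.val + t / 2) else .inr (.inl (p i.val + t / 2))
    | Sum.inr j =>
        if j.val = 0 then
          (if t % 2 = 0 then .inr (.inl (A + t / 2)) else .inl (A + t / 2))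
        else
          if t < 3 then .inr (.inr (2 - t))
          else if t = 3 then .inl hm
          else if t % 2 = 0 then .inr (.inl (A + b0 + 1 + (t - 4) / 2))
          else .inl (A + b0 + (t - 4) / 2)

lemma slot_valid {k : ℕ} (a : Fin k → ℕ) (b : Fin 2 → ℕ) (p : ℕ → ℕ) (A hm : ℕ)
    (h1 : ∀ i : Fin k, p i.val + a i ≤ A)
    (h3 : A + b 0 + b 1 = hm + 2) (hb0 : 1 ≤ b 0) (hb1 : 1 ≤ b 1)
    (i : Fin k ⊕ Fin 2) (t : ℕ)
    (ht : t < Sum.elim (fun i => 2 * a i) (fun j : Fin 2 => 2 * b j + 1) i) :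
    Sum.elim (fun n => n ≤ hm) (Sum.elim (fun n => n ≤ hm + 1) (fun n => n < 3))
      (slotFn p A (b 0) hm i t) := by
  rcases i with i | j
  · simp only [Sum.elim_inl] at ht
    have := h1 i
    unfold slotFn
    split_ifs <;> simp <;> omega
  · simp only [Sum.elim_inr] at ht
    unfold slotFn
    fin_cases j <;> simp only [Fin.mk_zero, Fin.mk_one, Fin.isValue] at ht ⊢ <;>
      split_ifs <;> simp <;> omega

lemma slot_inj {k : ℕ} (a : Fin k → ℕ) (b : Fin 2 → ℕ) (p : ℕ → ℕ) (A hm : ℕ)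
    (h1 : ∀ i : Fin k, p i.val + a i ≤ A)
    (h2 : ∀ i j : Fin k, i.val < j.val → p i.val + a i ≤ p j.val)
    (h3 : A + b 0 + b 1 = hm + 2) (hb0 : 1 ≤ b 0) (hb1 : 1 ≤ b 1)
    (i j : Fin k ⊕ Fin 2) (t s : ℕ)
    (ht : t < Sum.elim (fun i => 2 * a i) (fun j : Fin 2 => 2 * b j + 1) i)
    (hs : s < Sum.elim (fun i => 2 * a i) (fun j : Fin 2 => 2 * b j + 1) j)
    (heq : slotFn p A (b 0) hm i t = slotFn p A (b 0) hm j s) :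
    i = j ∧ t = s := by
  rcases i with i | i <;> rcases j with j | j <;>
    simp only [Sum.elim_inl, Sum.elim_inr] at ht hs
  · have hi := h1 i
    have hj := h1 j
    rcases lt_trichotomy i.val j.val with hij | hij | hij
    · exfalso
      have hij2 := h2 i j hij
      unfold slotFn at heq
      (try simp only [Fin.mk_zero, Fin.mk_one, Fin.isValue, Fin.val_zero, Fin.val_one,
        reduceIte, one_ne_zero] at heq)
      split_ifs at heq <;>
        simp only [Sum.inl.injEq, Sum.inr.injEq, reduceCtorEq] at heq <;> omega
    · have hij2 : i = j := Fin.ext hij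
      subst hij2
      refine ⟨rfl, ?_⟩
      unfold slotFn at heq
      (try simp only [Fin.mk_zero, Fin.mk_one, Fin.isValue, Fin.val_zero, Fin.val_one,
        reduceIte, one_ne_zero] at heq)
      split_ifs at heq <;>
        simp only [Sum.inl.injEq, Sum.inr.injEq, reduceCtorEq] at heq <;> omega
    · exfalso
      have hij2 := h2 j i hij
      unfold slotFn at heq
      (try simp only [Fin.mk_zero, Fin.mk_one, Fin.isValue, Fin.val_zero, Fin.val_one,
        reduceIte, one_ne_zero] at heq)
      split_ifs at heq <;>
        simp only [Sum.inl.injEq, Sum.inr.injEq, reduceCtorEq] at heq <;> omega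
  · exfalso
    have hi := h1 i
    fin_cases j <;> simp only [Fin.mk_zero, Fin.mk_one, Fin.isValue] at hs <;>
      unfold slotFn at heq <;>
      (try simp only [Fin.mk_zero, Fin.mk_one, Fin.isValue, Fin.val_zero, Fin.val_one,
        reduceIte, one_ne_zero] at heq) <;>
      split_ifs at heq <;>
      simp only [Sum.inl.injEq, Sum.inr.injEq, reduceCtorEq] at heq <;> omega
  · exfalso
    have hj := h1 j
    fin_cases i <;> simp only [Fin.mk_zero, Fin.mk_one, Fin.isValue] at ht <;>
      unfold slotFn at heq <;>
      (try simp only [Fin.mk_zero, Fin.mk_one, Fin.isValue, Fin.val_zero, Fin.val_one,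
        reduceIte, one_ne_zero] at heq) <;>
      split_ifs at heq <;>
      simp only [Sum.inl.injEq, Sum.inr.injEq, reduceCtorEq] at heq <;> omega
  · have hii : i = j ∨ i ≠ j := eq_or_ne i j
    rcases hii with rfl | hne
    · refine ⟨rfl, ?_⟩
      unfold slotFn at heq
      fin_cases i <;>
        simp only [Fin.mk_zero, Fin.mk_one, Fin.isValue, Fin.val_zero, Fin.val_one,
          reduceIte, one_ne_zero] at ht hs heq <;>
        split_ifs at heq <;>
        simp only [Sum.inl.injEq, Sum.inr.injEq, reduceCtorEq] at heq <;> omega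
    · exfalso
      unfold slotFn at heq
      fin_cases i <;> fin_cases j <;>
        simp only [Fin.mk_zero, Fin.mk_one, Fin.isValue, Fin.val_zero, Fin.val_one,
          reduceIte, one_ne_zero] at ht hs heq ⊢ <;>
        (try exact hne rfl) <;>
        split_ifs at heq <;>
        simp only [Sum.inl.injEq, Sum.inr.injEq, reduceCtorEq] at heq <;> omega

lemma slot_rel {k : ℕ} (p : ℕ → ℕ) (A b0 hm : ℕ)
    (i : Fin k ⊕ Fin 2) (t : ℕ) :
    (∃ m n, slotFn p A b0 hm i t = .inl m ∧ slotFn p A b0 hm i (t+1) = .inr (.inl n)) ∨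
    (∃ m n, slotFn p A b0 hm i t = .inr (.inl m) ∧ slotFn p A b0 hm i (t+1) = .inl n) ∨
    (∃ n, n < 2 ∧ slotFn p A b0 hm i t = .inr (.inr (n+1)) ∧
      slotFn p A b0 hm i (t+1) = .inr (.inr n)) ∨
    (slotFn p A b0 hm i t = .inr (.inr 0) ∧ slotFn p A b0 hm i (t+1) = .inl hm) := by
  rcases i with i | j
  · rcases Nat.mod_two_eq_zero_or_one t with hpar | hpar <;>
      have hpar' : (t + 1) % 2 = 1 - t % 2 := by omega
    · left
      exact ⟨p i.val + t / 2, p i.val + (t+1) / 2, by simp [slotFn, hpar],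
        by simp [slotFn, hpar', hpar]⟩
    · right; left
      exact ⟨p i.val + t / 2, p i.val + (t+1) / 2, by simp [slotFn, hpar],
        by simp [slotFn, hpar', hpar]⟩
  · fin_cases j
    · rcases Nat.mod_two_eq_zero_or_one t with hpar | hpar <;>
        have hpar' : (t + 1) % 2 = 1 - t % 2 := by omega
      · right; left
        exact ⟨A + t / 2, A + (t+1) / 2, by simp [slotFn, hpar],
          by simp [slotFn, hpar', hpar]⟩
      · left
        exact ⟨A + t / 2, A + (t+1) / 2, by simp [slotFn, hpar],
          by simp [slotFn, hpar', hpar]⟩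
    · rcases t with _ | _ | _ | _ | t
      · right; right; left; exact ⟨1, by omega, by simp [slotFn], by simp [slotFn]⟩
      · right; right; left; exact ⟨0, by omega, by simp [slotFn], by simp [slotFn]⟩
      · right; right; right; exact ⟨by simp [slotFn], by simp [slotFn]⟩
      · left; exact ⟨hm, A + b0 + 1 + 0, by simp [slotFn], by simp [slotFn]⟩
      · rcases Nat.mod_two_eq_zero_or_one t with hpar | hpar
        · have h1 : (t + 4) % 2 = 0 := by omega
          have h2 : (t + 4 + 1) % 2 = 1 := by omega
          right; left
          exact ⟨A + b0 + 1 + (t + 4 - 4) / 2, A + b0 + (t + 4 + 1 - 4) / 2,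
            by simp [slotFn, h1, h2], by simp [slotFn, h1, h2]⟩
        · have h1 : (t + 4) % 2 = 1 := by omega
          have h2 : (t + 4 + 1) % 2 = 0 := by omega
          left
          exact ⟨A + b0 + (t + 4 - 4) / 2, A + b0 + 1 + (t + 4 + 1 - 4) / 2,
            by simp [slotFn, h1, h2], by simp [slotFn, h1, h2]⟩

end Stmt9Helper

open Stmt9Helper

theorem stmt_9 (h k : ℕ) (hh : 2 ≤ h)
    (a : Fin k → ℕ) (ha : Antitone a) (ha1 : ∀ i, 1 ≤ a i)
    (b : Fin 2 → ℕ) (hb : b 1 ≤ b 0) (hb1 : 1 ≤ b 1)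
    (hsum : (∑ i, a i) + b 0 + b 1 = h + 1)
    (u : Fin h) :
    ContainsForest
      (attachPath (completeBipartiteGraph (Fin h) (Fin (h + 2))) (Sum.inl u) 3)
      (Sum.elim (fun i => 2 * a i) (fun i : Fin 2 => 2 * b i + 1)) := by
  classical
  have hb0 : 1 ≤ b 0 := le_trans hb1 hb
  set p : ℕ → ℕ := pre a with hp
  have hAtop : p k = ∑ i, a i := pre_top a
  have h1 : ∀ i : Fin k, p i.val + a i ≤ p k := fun i => by
    rw [← pre_succ a i]; exact pre_mono a i.isLt
  have h2 : ∀ i j : Fin k, i.val < j.val → p i.val + a i ≤ p j.val := fun i j hij => by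
    rw [← pre_succ a i]; exact pre_mono a hij
  have h3 : p k + b 0 + b 1 = (h - 1) + 2 := by omega
  have hpos : 0 < h := by omega
  set G := attachPath (completeBipartiteGraph (Fin h) (Fin (h + 2))) (Sum.inl u) 3 with hG
  let σ : Fin h ≃ Fin h := Equiv.swap u ⟨h - 1, by omega⟩
  let xv : ℕ → (Fin h ⊕ Fin (h + 2)) ⊕ Fin 3 :=
    fun n => Sum.inl (Sum.inl (σ ⟨n % h, Nat.mod_lt n hpos⟩))
  let yv : ℕ → (Fin h ⊕ Fin (h + 2)) ⊕ Fin 3 :=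
    fun n => Sum.inl (Sum.inr ⟨n % (h + 2), Nat.mod_lt n (by omega)⟩)
  let rv : ℕ → (Fin h ⊕ Fin (h + 2)) ⊕ Fin 3 :=
    fun n => Sum.inr ⟨n % 3, Nat.mod_lt n (by omega)⟩
  let emb : (ℕ ⊕ ℕ ⊕ ℕ) → (Fin h ⊕ Fin (h + 2)) ⊕ Fin 3 := Sum.elim xv (Sum.elim yv rv)
  -- injectivity of emb on valid codes
  have hxv : ∀ m n, m < h → n < h → xv m = xv n → m = n := by
    intro m n hm hn e
    simp only [xv, Sum.inl.injEq] at e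
    have e2 := σ.injective e
    have e3 := congrArg Fin.val e2
    simp only [Nat.mod_eq_of_lt hm, Nat.mod_eq_of_lt hn] at e3
    exact e3
  have hyv : ∀ m n, m < h + 2 → n < h + 2 → yv m = yv n → m = n := by
    intro m n hm hn e
    simp only [yv, Sum.inl.injEq, Sum.inr.injEq, Fin.mk.injEq] at e
    rwa [Nat.mod_eq_of_lt hm, Nat.mod_eq_of_lt hn] at e
  have hrv : ∀ m n, m < 3 → n < 3 → rv m = rv n → m = n := by
    intro m n hm hn e
    simp only [rv, Sum.inr.injEq, Fin.mk.injEq] at e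
    rwa [Nat.mod_eq_of_lt hm, Nat.mod_eq_of_lt hn] at e
  have embInj : ∀ c d : ℕ ⊕ ℕ ⊕ ℕ,
      Sum.elim (fun n => n ≤ h - 1) (Sum.elim (fun n => n ≤ h - 1 + 1) (fun n => n < 3)) c →
      Sum.elim (fun n => n ≤ h - 1) (Sum.elim (fun n => n ≤ h - 1 + 1) (fun n => n < 3)) d →
      emb c = emb d → c = d := by
    intro c d hc hd e
    rcases c with m | m | m <;> rcases d with n | n | n <;>
      simp only [emb, Sum.elim_inl, Sum.elim_inr] at hc hd e
    · exact congrArg Sum.inl (hxv m n (by omega) (by omega) e)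
    · exact absurd e (by simp [xv, yv])
    · exact absurd e (by simp [xv, rv])
    · exact absurd e (by simp [xv, yv])
    · exact congrArg (fun x => Sum.inr (Sum.inl x)) (hyv m n (by omega) (by omega) e)
    · exact absurd e (by simp [yv, rv])
    · exact absurd e (by simp [xv, rv])
    · exact absurd e (by simp [yv, rv])
    · exact congrArg (fun x => Sum.inr (Sum.inr x)) (hrv m n hc hd e)
  -- adjacency helpers
  have adjXY : ∀ m n, G.Adj (xv m) (yv n) := by
    intro m n
    rw [hG, attachPath, fromRel_adj]
    refine ⟨by simp [xv, yv], Or.inl (Or.inl ⟨Sum.inl (σ ⟨m % h, Nat.mod_lt m hpos⟩),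
      Sum.inr ⟨n % (h + 2), Nat.mod_lt n (by omega)⟩, rfl, rfl, by simp⟩)⟩
  have adjRR : ∀ n, n < 2 → G.Adj (rv (n + 1)) (rv n) := by
    intro n hn
    rw [hG, attachPath, fromRel_adj]
    refine ⟨?_, Or.inr (Or.inr (Or.inr ⟨⟨n % 3, Nat.mod_lt n (by omega)⟩,
      ⟨(n + 1) % 3, Nat.mod_lt _ (by omega)⟩, rfl, rfl, ?_⟩))⟩
    · simp only [rv, ne_eq, Sum.inr.injEq, Fin.mk.injEq]
      omega
    · show (n + 1) % 3 = n % 3 + 1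
      omega
  have hxvlast : xv (h - 1) = Sum.inl (Sum.inl u) := by
    have : (⟨(h - 1) % h, Nat.mod_lt _ hpos⟩ : Fin h) = ⟨h - 1, by omega⟩ :=
      Fin.ext (Nat.mod_eq_of_lt (by omega))
    simp only [xv, this, σ, Equiv.swap_apply_right]
  have adjRX : G.Adj (rv 0) (xv (h - 1)) := by
    rw [hxvlast, hG, attachPath, fromRel_adj]
    exact ⟨by simp [rv], Or.inr (Or.inr (Or.inl ⟨⟨0 % 3, by omega⟩, rfl, rfl, rfl⟩))⟩
  -- the embedding
  refine ⟨fun i t => emb (slotFn p (p k) (b 0) (h - 1) i t.val), ?_, ?_, ?_⟩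
  · intro i t s e
    have hv1 := slot_valid a b p (p k) (h - 1) h1 h3 hb0 hb1 i t.val t.isLt
    have hv2 := slot_valid a b p (p k) (h - 1) h1 h3 hb0 hb1 i s.val s.isLt
    have := slot_inj a b p (p k) (h - 1) h1 h2 h3 hb0 hb1 i i t.val s.val t.isLt s.isLt
      (embInj _ _ hv1 hv2 e)
    exact Fin.ext this.2
  · intro i j hij t s e
    have hv1 := slot_valid a b p (p k) (h - 1) h1 h3 hb0 hb1 i t.val t.isLt
    have hv2 := slot_valid a b p (p k) (h - 1) h1 h3 hb0 hb1 j s.val s.isLt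
    have := slot_inj a b p (p k) (h - 1) h1 h2 h3 hb0 hb1 i j t.val s.val t.isLt s.isLt
      (embInj _ _ hv1 hv2 e)
    exact hij this.1
  · intro i n hn
    show G.Adj (emb (slotFn p (p k) (b 0) (h - 1) i n))
      (emb (slotFn p (p k) (b 0) (h - 1) i (n + 1)))
    rcases slot_rel p (p k) (b 0) (h - 1) i n with
      ⟨m, m', e1, e2⟩ | ⟨m, m', e1, e2⟩ | ⟨m, hm2, e1, e2⟩ | ⟨e1, e2⟩ <;> rw [e1, e2]
    · exact adjXY m m'
    · exact (adjXY m' m).symm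
    · exact adjRR m hm2
    · show G.Adj (emb (Sum.inr (Sum.inr 0))) (emb (Sum.inl (h - 1)))
      have h5 : emb (Sum.inr (Sum.inr 0)) = rv 0 := rfl
      have h6 : emb (Sum.inl (h - 1)) = xv (h - 1) := rfl
      rw [h5, h6]
      exact adjRX
end

section
/- Let H be a 2-connected graph on n ≥ 5 vertices such that every vertex except possibly a specified vertex u₁ has degree at least 2, and let G be obtained from H by attaching a pendant path with 2 additional vertices at u₁ (identify u₁ with an endpoint of P_3). Then G contains each of P_2 ∪ P_2 ∪ P_3, P_4 ∪ P_3, and P_2 ∪ P_5 as a subgraph. -/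
open SimpleGraph

section ForestHelpers

private lemma crossing_aux {W : Type*} {G : SimpleGraph W} (S : Set W) :
    ∀ {a b : W} (_ : G.Walk b a), a ∈ S → b ∉ S → ∃ c d, c ∉ S ∧ d ∈ S ∧ G.Adj c d := by
  intro a b p
  induction p with
  | nil => exact fun ha hb => absurd ha hb
  | @cons u v w h q ih =>
    intro ha hb
    by_cases hv : v ∈ S
    · exact ⟨u, v, hb, hv, h⟩
    · exact ih ha hv

private lemma adj_of_reachable {W : Type*} {G : SimpleGraph W} {a b : W}
    (h : G.Reachable a b) (hne : a ≠ b) : ∃ c, G.Adj a c := by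
  obtain ⟨p⟩ := h
  cases p with
  | nil => exact absurd rfl hne
  | cons h q => exact ⟨_, h⟩

private lemma build223 {W : Type*} (G : SimpleGraph W) (v : Fin 7 → W)
    (hinj : Function.Injective v)
    (h01 : G.Adj (v 0) (v 1)) (h23 : G.Adj (v 2) (v 3))
    (h45 : G.Adj (v 4) (v 5)) (h56 : G.Adj (v 5) (v 6)) :
    ContainsForest G ![2, 2, 3] := by
  refine ⟨fun i => match i with
    | ⟨0, _⟩ => ![v 0, v 1]
    | ⟨1, _⟩ => ![v 2, v 3]
    | ⟨2, _⟩ => ![v 4, v 5, v 6], ?_, ?_, ?_⟩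
  · intro i
    fin_cases i <;>
    · intro a b hab
      fin_cases a <;> fin_cases b <;>
        simp_all [hinj.eq_iff, Matrix.cons_val_zero, Matrix.cons_val_one, Matrix.head_cons]
  · intro i j hij a b
    fin_cases i <;> fin_cases j <;> simp_all <;>
      fin_cases a <;> fin_cases b <;> simp_all [hinj.eq_iff]
  · intro i a ha
    fin_cases i
    · have ha' : a + 1 < 2 := ha
      have h0 : a = 0 := by omega
      subst h0; exact h01
    · have ha' : a + 1 < 2 := ha
      have h0 : a = 0 := by omega
      subst h0; exact h23
    · have ha' : a + 1 < 3 := ha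
      have h0 : a = 0 ∨ a = 1 := by omega
      rcases h0 with rfl | rfl
      · exact h45
      · exact h56

private lemma build43 {W : Type*} (G : SimpleGraph W) (v : Fin 7 → W)
    (hinj : Function.Injective v)
    (h01 : G.Adj (v 0) (v 1)) (h12 : G.Adj (v 1) (v 2)) (h23 : G.Adj (v 2) (v 3))
    (h45 : G.Adj (v 4) (v 5)) (h56 : G.Adj (v 5) (v 6)) :
    ContainsForest G ![4, 3] := by
  refine ⟨fun i => match i with
    | ⟨0, _⟩ => ![v 0, v 1, v 2, v 3]
    | ⟨1, _⟩ => ![v 4, v 5, v 6], ?_, ?_, ?_⟩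
  · intro i
    fin_cases i <;>
    · intro a b hab
      fin_cases a <;> fin_cases b <;>
        simp_all [hinj.eq_iff, Matrix.cons_val_zero, Matrix.cons_val_one, Matrix.head_cons]
  · intro i j hij a b
    fin_cases i <;> fin_cases j <;> simp_all <;>
      fin_cases a <;> fin_cases b <;> simp_all [hinj.eq_iff]
  · intro i a ha
    fin_cases i
    · have ha' : a + 1 < 4 := ha
      have h0 : a = 0 ∨ a = 1 ∨ a = 2 := by omega
      rcases h0 with rfl | rfl | rfl
      · exact h01
      · exact h12
      · exact h23
    · have ha' : a + 1 < 3 := ha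
      have h0 : a = 0 ∨ a = 1 := by omega
      rcases h0 with rfl | rfl
      · exact h45
      · exact h56

private lemma build25 {W : Type*} (G : SimpleGraph W) (v : Fin 7 → W)
    (hinj : Function.Injective v)
    (h01 : G.Adj (v 0) (v 1)) (h23 : G.Adj (v 2) (v 3)) (h34 : G.Adj (v 3) (v 4))
    (h45 : G.Adj (v 4) (v 5)) (h56 : G.Adj (v 5) (v 6)) :
    ContainsForest G ![2, 5] := by
  refine ⟨fun i => match i with
    | ⟨0, _⟩ => ![v 0, v 1]
    | ⟨1, _⟩ => ![v 2, v 3, v 4, v 5, v 6], ?_, ?_, ?_⟩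
  · intro i
    fin_cases i <;>
    · intro a b hab
      fin_cases a <;> fin_cases b <;>
        simp_all [hinj.eq_iff, Matrix.cons_val_zero, Matrix.cons_val_one, Matrix.head_cons]
  · intro i j hij a b
    fin_cases i <;> fin_cases j <;> simp_all <;>
      fin_cases a <;> fin_cases b <;> simp_all [hinj.eq_iff]
  · intro i a ha
    fin_cases i
    · have ha' : a + 1 < 2 := ha
      have h0 : a = 0 := by omega
      subst h0; exact h01
    · have ha' : a + 1 < 5 := ha
      have h0 : a = 0 ∨ a = 1 ∨ a = 2 ∨ a = 3 := by omega
      rcases h0 with rfl | rfl | rfl | rfl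
      · exact h23
      · exact h34
      · exact h45
      · exact h56

private lemma apadj_inl {V : Type*} (H : SimpleGraph V) (u₁ : V) {x y : V} (h : H.Adj x y) :
    (attachPath H u₁ 2).Adj (Sum.inl x) (Sum.inl y) := by
  rw [attachPath, SimpleGraph.fromRel_adj]
  exact ⟨by simp [h.ne], Or.inl (Or.inl ⟨x, y, rfl, rfl, h⟩)⟩

private lemma apadj_u1 {V : Type*} (H : SimpleGraph V) (u₁ : V) :
    (attachPath H u₁ 2).Adj (Sum.inl u₁) (Sum.inr 0) := by
  rw [attachPath, SimpleGraph.fromRel_adj]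
  exact ⟨by simp, Or.inl (Or.inr (Or.inl ⟨0, rfl, rfl, rfl⟩))⟩

private lemma apadj_r {V : Type*} (H : SimpleGraph V) (u₁ : V) :
    (attachPath H u₁ 2).Adj (Sum.inr 0) (Sum.inr 1) := by
  rw [attachPath, SimpleGraph.fromRel_adj]
  refine ⟨fun hcon => absurd (Sum.inr.inj hcon) (by decide),
    Or.inl (Or.inr (Or.inr ⟨0, 1, rfl, rfl, rfl⟩))⟩

private lemma inj7 {W : Type*} {v0 v1 v2 v3 v4 v5 v6 : W}
    (h01 : v0 ≠ v1) (h02 : v0 ≠ v2) (h03 : v0 ≠ v3) (h04 : v0 ≠ v4) (h05 : v0 ≠ v5)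
    (h06 : v0 ≠ v6) (h12 : v1 ≠ v2) (h13 : v1 ≠ v3) (h14 : v1 ≠ v4) (h15 : v1 ≠ v5)
    (h16 : v1 ≠ v6) (h23 : v2 ≠ v3) (h24 : v2 ≠ v4) (h25 : v2 ≠ v5) (h26 : v2 ≠ v6)
    (h34 : v3 ≠ v4) (h35 : v3 ≠ v5) (h36 : v3 ≠ v6) (h45 : v4 ≠ v5) (h46 : v4 ≠ v6)
    (h56 : v5 ≠ v6) :
    Function.Injective ![v0, v1, v2, v3, v4, v5, v6] := by
  intro p q hpq
  fin_cases p <;> fin_cases q <;>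
    simp only [Matrix.cons_val_zero, Matrix.cons_val_one, Matrix.head_cons,
      Matrix.cons_val_succ, Fin.mk_one, Fin.isValue] at hpq <;>
    first
      | rfl
      | exact absurd hpq (by assumption)
      | exact absurd hpq.symm (by assumption)

end ForestHelpers

theorem stmt_10 {V : Type*} [Fintype V] [DecidableEq V] (H : SimpleGraph V)
    [DecidableRel H.Adj] (hH : TwoConnected H) (hcard : 5 ≤ Fintype.card V)
    (u₁ : V) (hd : ∀ v, v ≠ u₁ → 2 ≤ H.degree v) :
    ContainsForest (attachPath H u₁ 2) ![2, 2, 3] ∧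
    ContainsForest (attachPath H u₁ 2) ![4, 3] ∧
    ContainsForest (attachPath H u₁ 2) ![2, 5] := by
  classical
  -- every vertex that could matter exists
  have hout4 : ∀ a b c d : V, ∃ e, e ≠ a ∧ e ≠ b ∧ e ≠ c ∧ e ≠ d := by
    intro a b c d
    have h1 := Finset.card_insert_le a ({b, c, d} : Finset V)
    have h2 := Finset.card_insert_le b ({c, d} : Finset V)
    have h3 := Finset.card_insert_le c ({d} : Finset V)
    have h4 := Finset.card_singleton d
    by_contra hcon
    push_neg at hcon
    have huniv : (Finset.univ : Finset V) ⊆ ({a, b, c, d} : Finset V) := by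
      intro t _
      simp only [Finset.mem_insert, Finset.mem_singleton]
      by_cases e1 : t = a; · exact Or.inl e1
      by_cases e2 : t = b; · exact Or.inr (Or.inl e2)
      by_cases e3 : t = c; · exact Or.inr (Or.inr (Or.inl e3))
      exact Or.inr (Or.inr (Or.inr (hcon t e1 e2 e3)))
    have h5 := Finset.card_le_card huniv
    rw [Finset.card_univ] at h5
    omega
  -- two distinct neighbours for every vertex other than u₁
  have hdeg2 : ∀ v, v ≠ u₁ → ∀ w, ∃ y, y ≠ w ∧ y ≠ v ∧ H.Adj v y := by
    intro v hv w
    have h2 : 1 < (H.neighborFinset v).card := hd v hv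
    obtain ⟨a, b, ha, hb, hab⟩ := Finset.one_lt_card_iff.mp h2
    rw [SimpleGraph.mem_neighborFinset] at ha hb
    by_cases haw : a = w
    · exact ⟨b, by rw [← haw]; exact hab.symm, hb.ne', hb⟩
    · exact ⟨a, haw, ha.ne', ha⟩
  -- connectivity of H - u₁
  have hconn' := hH.2 {u₁} (by simp)
  rw [Finset.coe_singleton] at hconn'
  -- crossing lemma
  have hcross : ∀ T : Set V, (∀ x ∈ T, x ≠ u₁) → ∀ a ∈ T, ∀ b, b ∉ T → b ≠ u₁ →
      ∃ c, c ∉ T ∧ c ≠ u₁ ∧ ∃ d ∈ T, H.Adj c d := by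
    intro T hT a ha b hbT hbu
    have haU : a ∈ ({u₁} : Set V)ᶜ := by simpa using hT a ha
    have hbU : b ∈ ({u₁} : Set V)ᶜ := by simpa using hbu
    obtain ⟨p⟩ := hconn'.preconnected ⟨b, hbU⟩ ⟨a, haU⟩
    obtain ⟨c, d, hc, hdm, hcd⟩ :=
      crossing_aux (G := H.induce ({u₁} : Set V)ᶜ) {v | (v : V) ∈ T} p ha hbT
    exact ⟨(c : V), hc, fun h => c.2 h, (d : V), hdm, hcd⟩
  -- a neighbour avoiding u₁
  have hnbr' : ∀ p q : V, p ≠ u₁ → q ≠ u₁ → p ≠ q → ∃ r, r ≠ u₁ ∧ H.Adj p r := by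
    intro p q hp hq hpq
    have hpU : p ∈ ({u₁} : Set V)ᶜ := by simpa using hp
    have hqU : q ∈ ({u₁} : Set V)ᶜ := by simpa using hq
    obtain ⟨c, hc⟩ := adj_of_reachable (hconn'.preconnected ⟨p, hpU⟩ ⟨q, hqU⟩)
        (fun h => hpq (congrArg Subtype.val h))
    exact ⟨(c : V), fun h => c.2 h, hc⟩
  -- u₁ has two distinct neighbours
  have hnbru : ∀ w : V, w ≠ u₁ → ∃ s, s ≠ w ∧ H.Adj u₁ s := by
    intro w hw
    have hc := hH.2 {w} (by simp)
    rw [Finset.coe_singleton] at hc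
    have hu : u₁ ∈ ({w} : Set V)ᶜ := by simpa using hw.symm
    obtain ⟨x0, hx1, hx2, _, _⟩ := hout4 w u₁ u₁ u₁
    have hxU : x0 ∈ ({w} : Set V)ᶜ := by simpa using hx1
    obtain ⟨c, hcadj⟩ := adj_of_reachable (hc.preconnected ⟨u₁, hu⟩ ⟨x0, hxU⟩)
        (fun h => hx2 (congrArg Subtype.val h).symm)
    exact ⟨(c : V), fun h => c.2 h, hcadj⟩
  have hu2 : ∃ s t, s ≠ t ∧ H.Adj u₁ s ∧ H.Adj u₁ t := by
    obtain ⟨w0, hw0, _, _, _⟩ := hout4 u₁ u₁ u₁ u₁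
    obtain ⟨s, _, hs⟩ := hnbru w0 hw0
    obtain ⟨t, hts, ht⟩ := hnbru s hs.ne'
    exact ⟨t, s, hts, ht, hs⟩
  -- the key structural dichotomy
  have key : ((∃ w x y z : V, w ≠ u₁ ∧ x ≠ u₁ ∧ y ≠ u₁ ∧ z ≠ u₁ ∧
        w ≠ x ∧ w ≠ y ∧ w ≠ z ∧ x ≠ y ∧ x ≠ z ∧ y ≠ z ∧
        H.Adj w x ∧ H.Adj x y ∧ H.Adj y z) ∧
      (∃ a b c d e : V, a ≠ b ∧ a ≠ c ∧ a ≠ d ∧ a ≠ e ∧ b ≠ c ∧ b ≠ d ∧ b ≠ e ∧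
        c ≠ d ∧ c ≠ e ∧ d ≠ e ∧ H.Adj a b ∧ H.Adj b c ∧ H.Adj c d ∧ H.Adj d e)) ∨
      (∃ a x y z : V, a ≠ u₁ ∧ x ≠ u₁ ∧ y ≠ u₁ ∧ z ≠ u₁ ∧
        a ≠ x ∧ a ≠ y ∧ a ≠ z ∧ x ≠ y ∧ x ≠ z ∧ y ≠ z ∧
        H.Adj a x ∧ H.Adj a y ∧ H.Adj a z ∧
        H.Adj u₁ x ∧ H.Adj u₁ y ∧ H.Adj u₁ z) := by
    by_cases h4 : ∃ w x y z : V, w ≠ u₁ ∧ x ≠ u₁ ∧ y ≠ u₁ ∧ z ≠ u₁ ∧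
        w ≠ x ∧ w ≠ y ∧ w ≠ z ∧ x ≠ y ∧ x ≠ z ∧ y ≠ z ∧
        H.Adj w x ∧ H.Adj x y ∧ H.Adj y z
    · left
      refine ⟨h4, ?_⟩
      obtain ⟨w, x, y, z, hw, hx, hy, hz, hwx, hwy, hwz, hxy, hxz, hyz, awx, axy, ayz⟩ := h4
      by_cases hb : ∃ b : V, b ≠ u₁ ∧ b ≠ w ∧ b ≠ x ∧ b ≠ y ∧ b ≠ z
      · -- there is a vertex outside {u₁,w,x,y,z}
        obtain ⟨b, hbu, hbw, hbx, hby, hbz⟩ := hb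
        obtain ⟨c, hcT, hcu, d, hdT, acd⟩ := hcross ({w, x, y, z} : Set V)
          (by
            rintro t ht
            simp only [Set.mem_insert_iff, Set.mem_singleton_iff] at ht
            rcases ht with rfl | rfl | rfl | rfl <;> assumption)
          w (by simp) b (by simp [hbw, hbx, hby, hbz]) hbu
        simp only [Set.mem_insert_iff, Set.mem_singleton_iff, not_or] at hcT
        obtain ⟨hcw, hcx, hcy, hcz⟩ := hcT
        simp only [Set.mem_insert_iff, Set.mem_singleton_iff] at hdT
        rcases hdT with h | h | h | h <;> rw [h] at acd
        · exact ⟨c, w, x, y, z, hcw, hcx, hcy, hcz, hwx, hwy, hwz, hxy, hxz, hyz,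
            acd, awx, axy, ayz⟩
        · -- d = x : use second neighbour of w
          obtain ⟨t, htx, htw, awt⟩ := hdeg2 w hw x
          by_cases h2 : t = y
          · rw [h2] at awt
            exact ⟨c, x, w, y, z, hcx, hcw, hcy, hcz, hwx.symm, hxy, hxz, hwy, hwz, hyz,
              acd, awx.symm, awt, ayz⟩
          by_cases h3 : t = z
          · rw [h3] at awt
            exact ⟨c, x, w, z, y, hcx, hcw, hcz, hcy, hwx.symm, hxz, hxy, hwz, hwy, hyz.symm,
              acd, awx.symm, awt, ayz.symm⟩
          · exact ⟨t, w, x, y, z, htw, htx, h2, h3, hwx, hwy, hwz, hxy, hxz, hyz,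
              awt.symm, awx, axy, ayz⟩
        · -- d = y : use second neighbour of z
          obtain ⟨t, hty, htz, azt⟩ := hdeg2 z hz y
          by_cases h2 : t = w
          · rw [h2] at azt
            exact ⟨c, y, z, w, x, hcy, hcz, hcw, hcx, hyz, hwy.symm, hxy.symm, hwz.symm,
              hxz.symm, hwx, acd, ayz, azt, awx⟩
          by_cases h3 : t = x
          · rw [h3] at azt
            exact ⟨c, y, z, x, w, hcy, hcz, hcx, hcw, hyz, hxy.symm, hwy.symm, hxz.symm,
              hwz.symm, hwx.symm, acd, ayz, azt, awx.symm⟩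
          · exact ⟨w, x, y, z, t, hwx, hwy, hwz, (Ne.symm h2), hxy, hxz, (Ne.symm h3), hyz,
              hty.symm, htz.symm, awx, axy, ayz, azt⟩
        · exact ⟨w, x, y, z, c, hwx, hwy, hwz, (Ne.symm hcw), hxy, hxz, (Ne.symm hcx), hyz,
            (Ne.symm hcy), (Ne.symm hcz), awx, axy, ayz, acd.symm⟩
      · -- V = {u₁, w, x, y, z}
        push_neg at hb
        have hmem : ∀ r : V, r ≠ u₁ → r = w ∨ r = x ∨ r = y ∨ r = z := by
          intro r hr
          by_cases e1 : r = w; · exact Or.inl e1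
          by_cases e2 : r = x; · exact Or.inr (Or.inl e2)
          by_cases e3 : r = y; · exact Or.inr (Or.inr (Or.inl e3))
          exact Or.inr (Or.inr (Or.inr (hb r hr e1 e2 e3)))
        obtain ⟨s, t, hst, has, hat⟩ := hu2
        have B1 : H.Adj u₁ w → ∃ a b c d e : V, a ≠ b ∧ a ≠ c ∧ a ≠ d ∧ a ≠ e ∧ b ≠ c ∧
            b ≠ d ∧ b ≠ e ∧ c ≠ d ∧ c ≠ e ∧ d ≠ e ∧
            H.Adj a b ∧ H.Adj b c ∧ H.Adj c d ∧ H.Adj d e :=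
          fun h => ⟨u₁, w, x, y, z, hw.symm, hx.symm, hy.symm, hz.symm, hwx, hwy, hwz,
            hxy, hxz, hyz, h, awx, axy, ayz⟩
        have B2 : H.Adj z u₁ → ∃ a b c d e : V, a ≠ b ∧ a ≠ c ∧ a ≠ d ∧ a ≠ e ∧ b ≠ c ∧
            b ≠ d ∧ b ≠ e ∧ c ≠ d ∧ c ≠ e ∧ d ≠ e ∧
            H.Adj a b ∧ H.Adj b c ∧ H.Adj c d ∧ H.Adj d e :=
          fun h => ⟨w, x, y, z, u₁, hwx, hwy, hwz, hw, hxy, hxz, hx, hyz, hy, hz,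
            awx, axy, ayz, h⟩
        have B3 : H.Adj x u₁ → H.Adj u₁ y → ∃ a b c d e : V, a ≠ b ∧ a ≠ c ∧ a ≠ d ∧
            a ≠ e ∧ b ≠ c ∧ b ≠ d ∧ b ≠ e ∧ c ≠ d ∧ c ≠ e ∧ d ≠ e ∧
            H.Adj a b ∧ H.Adj b c ∧ H.Adj c d ∧ H.Adj d e :=
          fun h1 h2 => ⟨w, x, u₁, y, z, hwx, hw, hwy, hwz, hx, hxy, hxz, hy.symm, hz.symm,
            hyz, awx, h1, h2, ayz⟩
        have hs' := hmem s has.ne'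
        have ht' := hmem t hat.ne'
        rcases hs' with h | h | h | h <;> rw [h] at has hst
        · exact B1 has
        · rcases ht' with h' | h' | h' | h' <;> rw [h'] at hat hst
          · exact B1 hat
          · exact absurd rfl hst
          · exact B3 has.symm hat
          · exact B2 hat.symm
        · rcases ht' with h' | h' | h' | h' <;> rw [h'] at hat hst
          · exact B1 hat
          · exact B3 hat.symm has
          · exact absurd rfl hst
          · exact B2 hat.symm
        · exact B2 has.symm
    · -- no P4 avoiding u₁ : star structure
      right
      -- first get a P3 avoiding u₁
      obtain ⟨p0, hp0u, _, _, _⟩ := hout4 u₁ u₁ u₁ u₁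
      obtain ⟨q0, hq0u, hq0p, _, _⟩ := hout4 u₁ p0 p0 p0
      obtain ⟨x1, hx1u, apx⟩ := hnbr' p0 q0 hp0u hq0u (Ne.symm hq0p)
      have hp0x1 : p0 ≠ x1 := apx.ne
      obtain ⟨b1, hb1u, hb1p, hb1x, _⟩ := hout4 u₁ p0 x1 x1
      obtain ⟨c0, hc0T, hc0u, d0, hd0T, acd0⟩ := hcross ({p0, x1} : Set V)
        (by
          rintro t ht
          simp only [Set.mem_insert_iff, Set.mem_singleton_iff] at ht
          rcases ht with rfl | rfl <;> assumption)
        p0 (by simp) b1 (by simp [hb1p, hb1x]) hb1u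
      simp only [Set.mem_insert_iff, Set.mem_singleton_iff, not_or] at hc0T
      obtain ⟨hc0p, hc0x⟩ := hc0T
      simp only [Set.mem_insert_iff, Set.mem_singleton_iff] at hd0T
      -- the star extraction from a maximal P3
      have hstar : ∀ u a v : V, u ≠ u₁ → a ≠ u₁ → v ≠ u₁ → u ≠ a → u ≠ v → a ≠ v →
          H.Adj u a → H.Adj a v →
          ∃ a' x' y' z' : V, a' ≠ u₁ ∧ x' ≠ u₁ ∧ y' ≠ u₁ ∧ z' ≠ u₁ ∧
            a' ≠ x' ∧ a' ≠ y' ∧ a' ≠ z' ∧ x' ≠ y' ∧ x' ≠ z' ∧ y' ≠ z' ∧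
            H.Adj a' x' ∧ H.Adj a' y' ∧ H.Adj a' z' ∧
            H.Adj u₁ x' ∧ H.Adj u₁ y' ∧ H.Adj u₁ z' := by
        intro u a v hu ha hv huA huV haV aua aav
        -- no triangle
        have huv : ¬H.Adj u v := by
          intro huvadj
          obtain ⟨b, hbu, hbU, hbA, hbV⟩ := hout4 u₁ u a v
          obtain ⟨c, hcT, hcu, d, hdT, acd⟩ := hcross ({u, a, v} : Set V)
            (by
              rintro t ht
              simp only [Set.mem_insert_iff, Set.mem_singleton_iff] at ht
              rcases ht with rfl | rfl | rfl <;> assumption)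
            u (by simp) b (by simp [hbU, hbA, hbV]) hbu
          simp only [Set.mem_insert_iff, Set.mem_singleton_iff, not_or] at hcT
          obtain ⟨hcU, hcA, hcV⟩ := hcT
          simp only [Set.mem_insert_iff, Set.mem_singleton_iff] at hdT
          rcases hdT with h | h | h <;> rw [h] at acd
          · exact h4 ⟨c, u, a, v, hcu, hu, ha, hv, hcU, hcA, hcV, huA, huV, haV,
              acd, aua, aav⟩
          · exact h4 ⟨c, a, u, v, hcu, ha, hu, hv, hcA, hcU, hcV, huA.symm, haV, huV, acd, aua.symm, huvadj⟩
          · exact h4 ⟨c, v, a, u, hcu, hv, ha, hu, hcV, hcA, hcU, haV.symm, huV.symm,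
              huA.symm, acd, aav.symm, aua.symm⟩
        -- u is adjacent to u₁
        have auu1 : H.Adj u₁ u := by
          obtain ⟨t, hta, htu, aut⟩ := hdeg2 u hu a
          by_cases h1 : t = u₁
          · rw [h1] at aut; exact aut.symm
          by_cases h2 : t = v
          · rw [h2] at aut; exact absurd aut huv
          · exact absurd ⟨t, u, a, v, h1, hu, ha, hv, htu, hta, h2, huA, huV, haV,
              aut.symm, aua, aav⟩ h4
        have avu1 : H.Adj u₁ v := by
          obtain ⟨t, hta, htv, avt⟩ := hdeg2 v hv a
          by_cases h1 : t = u₁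
          · rw [h1] at avt; exact avt.symm
          by_cases h2 : t = u
          · rw [h2] at avt; exact absurd avt.symm huv
          · exact absurd ⟨t, v, a, u, h1, hv, ha, hu, htv, hta, h2, haV.symm, huV.symm,
              huA.symm, avt.symm, aav.symm, aua.symm⟩ h4
        -- third leaf
        obtain ⟨b, hbu, hbU, hbA, hbV⟩ := hout4 u₁ u a v
        obtain ⟨c, hcT, hcu, d, hdT, acd⟩ := hcross ({u, a, v} : Set V)
          (by
            rintro t ht
            simp only [Set.mem_insert_iff, Set.mem_singleton_iff] at ht
            rcases ht with rfl | rfl | rfl <;> assumption)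
          u (by simp) b (by simp [hbU, hbA, hbV]) hbu
        simp only [Set.mem_insert_iff, Set.mem_singleton_iff, not_or] at hcT
        obtain ⟨hcU, hcA, hcV⟩ := hcT
        simp only [Set.mem_insert_iff, Set.mem_singleton_iff] at hdT
        rcases hdT with h | h | h <;> rw [h] at acd
        · exact absurd ⟨c, u, a, v, hcu, hu, ha, hv, hcU, hcA, hcV, huA, huV, haV,
            acd, aua, aav⟩ h4
        · -- c ~ a : c is the third leaf; show c ~ u₁
          have acu1 : H.Adj u₁ c := by
            obtain ⟨t, hta, htc, act⟩ := hdeg2 c hcu a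
            by_cases h1 : t = u₁
            · rw [h1] at act; exact act.symm
            by_cases h2 : t = u
            · rw [h2] at act
              exact absurd ⟨c, u, a, v, hcu, hu, ha, hv, hcU, hcA, hcV, huA, huV, haV,
                act, aua, aav⟩ h4
            by_cases h3 : t = v
            · rw [h3] at act
              exact absurd ⟨c, v, a, u, hcu, hv, ha, hu, hcV, hcA, hcU, haV.symm,
                huV.symm, huA.symm, act, aav.symm, aua.symm⟩ h4
            · exact absurd ⟨t, c, a, u, h1, hcu, ha, hu, htc, hta, h2, hcA, hcU,
                huA.symm, act.symm, acd, aua.symm⟩ h4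
          exact ⟨a, u, v, c, ha, hu, hv, hcu, huA.symm, haV, (Ne.symm hcA), huV, (Ne.symm hcU),
            (Ne.symm hcV), aua.symm, aav, acd.symm, auu1, avu1, acu1⟩
        · exact absurd ⟨c, v, a, u, hcu, hv, ha, hu, hcV, hcA, hcU, haV.symm, huV.symm,
            huA.symm, acd, aav.symm, aua.symm⟩ h4
      rcases hd0T with h | h <;> rw [h] at acd0
      · exact hstar x1 p0 c0 hx1u hp0u hc0u (fun h' => hp0x1 h'.symm) (Ne.symm hc0x)
          (Ne.symm hc0p) apx.symm acd0.symm
      · exact hstar p0 x1 c0 hp0u hx1u hc0u hp0x1 (Ne.symm hc0p) (Ne.symm hc0x) apx acd0.symm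
  -- assemble the three forests
  rcases key with ⟨⟨w, x, y, z, hw, hx, hy, hz, hwx, hwy, hwz, hxy, hxz, hyz, awx, axy, ayz⟩,
      ⟨a, b, c, d, e, hab, hac, had, hae, hbc, hbd, hbe, hcd, hce, hde, Aab, Abc, Acd, Ade⟩⟩ |
      ⟨a, x, y, z, ha, hx, hy, hz, hax, hay, haz, hxy, hxz, hyz, Aax, Aay, Aaz, Aux, Auy, Auz⟩
  · have hr01 : (Sum.inr 0 : V ⊕ Fin 2) ≠ Sum.inr 1 := fun h =>
      absurd (Sum.inr.inj h) (by decide)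
    have hll : ∀ {s t : V}, s ≠ t → (Sum.inl s : V ⊕ Fin 2) ≠ Sum.inl t :=
      fun hst h => hst (Sum.inl.inj h)
    have hlr : ∀ (t : V) (j : Fin 2), (Sum.inl t : V ⊕ Fin 2) ≠ Sum.inr j :=
      fun t j h => by simp at h
    have hrl : ∀ (j : Fin 2) (t : V), (Sum.inr j : V ⊕ Fin 2) ≠ Sum.inl t :=
      fun j t => (hlr t j).symm
    refine ⟨?_, ?_, ?_⟩
    · exact build223 _ ![Sum.inr 0, Sum.inr 1, Sum.inl d, Sum.inl e, Sum.inl a, Sum.inl b,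
        Sum.inl c]
        (inj7 hr01 (hrl 0 d) (hrl 0 e) (hrl 0 a) (hrl 0 b) (hrl 0 c)
          (hrl 1 d) (hrl 1 e) (hrl 1 a) (hrl 1 b) (hrl 1 c)
          (hll hde) (hll had.symm) (hll hbd.symm) (hll hcd.symm)
          (hll hae.symm) (hll hbe.symm) (hll hce.symm)
          (hll hab) (hll hac) (hll hbc))
        (apadj_r H u₁) (apadj_inl H u₁ Ade) (apadj_inl H u₁ Aab) (apadj_inl H u₁ Abc)
    · exact build43 _ ![Sum.inl w, Sum.inl x, Sum.inl y, Sum.inl z, Sum.inl u₁, Sum.inr 0,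
        Sum.inr 1]
        (inj7 (hll hwx) (hll hwy) (hll hwz) (hll hw) (hlr w 0) (hlr w 1)
          (hll hxy) (hll hxz) (hll hx) (hlr x 0) (hlr x 1)
          (hll hyz) (hll hy) (hlr y 0) (hlr y 1)
          (hll hz) (hlr z 0) (hlr z 1)
          (hlr u₁ 0) (hlr u₁ 1) hr01)
        (apadj_inl H u₁ awx) (apadj_inl H u₁ axy) (apadj_inl H u₁ ayz)
        (apadj_u1 H u₁) (apadj_r H u₁)
    · exact build25 _ ![Sum.inr 0, Sum.inr 1, Sum.inl a, Sum.inl b, Sum.inl c, Sum.inl d,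
        Sum.inl e]
        (inj7 hr01 (hrl 0 a) (hrl 0 b) (hrl 0 c) (hrl 0 d) (hrl 0 e)
          (hrl 1 a) (hrl 1 b) (hrl 1 c) (hrl 1 d) (hrl 1 e)
          (hll hab) (hll hac) (hll had) (hll hae)
          (hll hbc) (hll hbd) (hll hbe) (hll hcd) (hll hce) (hll hde))
        (apadj_r H u₁) (apadj_inl H u₁ Aab) (apadj_inl H u₁ Abc) (apadj_inl H u₁ Acd)
        (apadj_inl H u₁ Ade)
  · have hr01 : (Sum.inr 0 : V ⊕ Fin 2) ≠ Sum.inr 1 := fun h =>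
      absurd (Sum.inr.inj h) (by decide)
    have hll : ∀ {s t : V}, s ≠ t → (Sum.inl s : V ⊕ Fin 2) ≠ Sum.inl t :=
      fun hst h => hst (Sum.inl.inj h)
    have hlr : ∀ (t : V) (j : Fin 2), (Sum.inl t : V ⊕ Fin 2) ≠ Sum.inr j :=
      fun t j h => by simp at h
    have hrl : ∀ (j : Fin 2) (t : V), (Sum.inr j : V ⊕ Fin 2) ≠ Sum.inl t :=
      fun j t => (hlr t j).symm
    refine ⟨?_, ?_, ?_⟩
    · exact build223 _ ![Sum.inr 0, Sum.inr 1, Sum.inl u₁, Sum.inl z, Sum.inl x, Sum.inl a,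
        Sum.inl y]
        (inj7 hr01 (hrl 0 u₁) (hrl 0 z) (hrl 0 x) (hrl 0 a) (hrl 0 y)
          (hrl 1 u₁) (hrl 1 z) (hrl 1 x) (hrl 1 a) (hrl 1 y)
          (hll hz.symm) (hll hx.symm) (hll ha.symm) (hll hy.symm)
          (hll hxz.symm) (hll haz.symm) (hll hyz.symm)
          (hll hax.symm) (hll hxy) (hll hay))
        (apadj_r H u₁) (apadj_inl H u₁ Auz) (apadj_inl H u₁ Aax.symm) (apadj_inl H u₁ Aay)
    · exact build43 _ ![Sum.inl x, Sum.inl u₁, Sum.inr 0, Sum.inr 1, Sum.inl y, Sum.inl a,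
        Sum.inl z]
        (inj7 (hll hx) (hlr x 0) (hlr x 1) (hll hxy) (hll hax.symm) (hll hxz)
          (hlr u₁ 0) (hlr u₁ 1) (hll hy.symm) (hll ha.symm) (hll hz.symm)
          hr01 (hrl 0 y) (hrl 0 a) (hrl 0 z)
          (hrl 1 y) (hrl 1 a) (hrl 1 z)
          (hll hay.symm) (hll hyz) (hll haz))
        (apadj_inl H u₁ Aux.symm) (apadj_u1 H u₁) (apadj_r H u₁)
        (apadj_inl H u₁ Aay.symm) (apadj_inl H u₁ Aaz)
    · exact build25 _ ![Sum.inr 0, Sum.inr 1, Sum.inl x, Sum.inl u₁, Sum.inl y, Sum.inl a,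
        Sum.inl z]
        (inj7 hr01 (hrl 0 x) (hrl 0 u₁) (hrl 0 y) (hrl 0 a) (hrl 0 z)
          (hrl 1 x) (hrl 1 u₁) (hrl 1 y) (hrl 1 a) (hrl 1 z)
          (hll hx) (hll hxy) (hll hax.symm) (hll hxz)
          (hll hy.symm) (hll ha.symm) (hll hz.symm)
          (hll hay.symm) (hll hyz) (hll haz))
        (apadj_r H u₁) (apadj_inl H u₁ Aux.symm) (apadj_inl H u₁ Auy) (apadj_inl H u₁ Aay.symm)
        (apadj_inl H u₁ Aaz)
end

section
/- Let H be a 2-connected graph on n ≥ 6 vertices that is not a subgraph of S_{n,2} = K_2 ∨ complement(K_{n-2}), and let G be obtained from H by attaching a pendant path with 2 additional vertices at a vertex u₁ of H (identify u₁ with an endpoint of P_3). Then G contains P_5 ∪ P_3 as a subgraph. -/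
open SimpleGraph

set_option linter.unusedSectionVars false

namespace Stmt12Aux

variable {V : Type*} [Fintype V] [DecidableEq V]

lemma exists_notMem (s : Finset V) (h : s.card < Fintype.card V) : ∃ z, z ∉ s := by
  by_contra hc
  push_neg at hc
  have h2 : (Finset.univ : Finset V) ⊆ s := fun z _ => hc z
  have := Finset.card_le_card h2
  rw [Finset.card_univ] at this
  omega

lemma cross (H : SimpleGraph V) (S : V → Prop) :
    ∀ {u v : V} (w : H.Walk u v), ¬ S u → S v →
    ∃ x y, x ∈ w.support ∧ y ∈ w.support ∧ ¬ S x ∧ S y ∧ H.Adj x y ∧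
      ∃ w' : H.Walk u x, ∀ z ∈ w'.support, z ∈ w.support ∧ ¬ S z := by
  intro u v w
  induction w with
  | nil => intro hu hv; exact absurd hv hu
  | @cons u m v h p ih =>
    intro hu hv
    by_cases hm : S m
    · refine ⟨u, m, by simp, by simp, hu, hm, h, Walk.nil, ?_⟩
      intro z hz
      simp only [Walk.support_nil, List.mem_singleton] at hz
      subst hz
      exact ⟨by simp, hu⟩
    · obtain ⟨x, y, hxs, hys, hx, hy, hadj, w', hw'⟩ := ih hm hv
      refine ⟨x, y, by simp [hxs], by simp [hys], hx, hy, hadj, Walk.cons h w', ?_⟩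
      intro z hz
      rw [Walk.support_cons, List.mem_cons] at hz
      rcases hz with rfl | hz
      · exact ⟨by simp, hu⟩
      · obtain ⟨h1, h2⟩ := hw' z hz
        exact ⟨by simp [h1], h2⟩

lemma W1 {H : SimpleGraph V} (hH : TwoConnected H) (c u v : V) (hu : u ≠ c) (hv : v ≠ c) :
    ∃ w : H.Walk u v, ∀ z ∈ w.support, z ≠ c := by
  have hconn := hH.2 {c} (by simp)
  have hu' : u ∈ ((({c} : Finset V) : Set V))ᶜ := by simp [hu]
  have hv' : v ∈ ((({c} : Finset V) : Set V))ᶜ := by simp [hv]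
  obtain ⟨p⟩ := hconn.preconnected ⟨u, hu'⟩ ⟨v, hv'⟩
  refine ⟨p.map (SimpleGraph.Embedding.induce _).toHom, ?_⟩
  intro z hz
  replace hz : z ∈ (p.map (SimpleGraph.Embedding.induce _).toHom).support := hz
  rw [Walk.support_map, List.mem_map] at hz
  obtain ⟨t, _, rfl⟩ := hz
  have ht := t.2
  simp only [Finset.coe_singleton, Set.mem_compl_iff, Set.mem_singleton_iff] at ht
  exact ht

lemma first_step {H : SimpleGraph V} {u v : V} (w : H.Walk u v) (hne : u ≠ v) :
    ∃ m, H.Adj u m ∧ m ∈ w.support := by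
  cases w with
  | nil => exact absurd rfl hne
  | cons h p => exact ⟨_, h, by simp⟩

lemma only_nbr {H : SimpleGraph V} (hH : TwoConnected H) (hcard : 3 ≤ Fintype.card V) (v c : V)
    (hvc : v ≠ c) (hnb : ∀ w, H.Adj v w → w = c) : False := by
  have hle : ({v, c} : Finset V).card ≤ 2 := (Finset.card_insert_le _ _).trans (by simp)
  obtain ⟨z, hz⟩ := exists_notMem {v, c} (by omega)
  simp only [Finset.mem_insert, Finset.mem_singleton, not_or] at hz
  obtain ⟨w, hw⟩ := W1 hH c v z hvc hz.2
  obtain ⟨m, hm, hms⟩ := first_step w (Ne.symm hz.1)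
  exact hw m hms (hnb m hm)

lemma deg2 {H : SimpleGraph V} (hH : TwoConnected H) (hcard : 6 ≤ Fintype.card V) (v : V) :
    ∃ a b, a ≠ b ∧ H.Adj v a ∧ H.Adj v b := by
  obtain ⟨z, hz⟩ := exists_notMem {v} (by simp; omega)
  rw [Finset.mem_singleton] at hz
  have hle : ({v, z} : Finset V).card ≤ 2 := (Finset.card_insert_le _ _).trans (by simp)
  obtain ⟨c, hc⟩ := exists_notMem {v, z} (by omega)
  simp only [Finset.mem_insert, Finset.mem_singleton, not_or] at hc
  obtain ⟨w, hw⟩ := W1 hH c v z (Ne.symm hc.1) (Ne.symm hc.2)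
  obtain ⟨a, hva, has⟩ := first_step w (Ne.symm hz)
  have hle2 : ({v, a} : Finset V).card ≤ 2 := (Finset.card_insert_le _ _).trans (by simp)
  obtain ⟨z', hz'⟩ := exists_notMem {v, a} (by omega)
  simp only [Finset.mem_insert, Finset.mem_singleton, not_or] at hz'
  obtain ⟨w', hw'⟩ := W1 hH a v z' (hva.ne) hz'.2
  obtain ⟨b, hvb, hbs⟩ := first_step w' (Ne.symm hz'.1)
  exact ⟨b, a, hw' b hbs, hvb, hva⟩

lemma cover_contra {H : SimpleGraph V} (hcard : 6 ≤ Fintype.card V)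
    (hns : ¬ SubgraphOf H (Sgraph (Fintype.card V) 2)) (a b : V) :
    ∃ x y, H.Adj x y ∧ x ≠ a ∧ x ≠ b ∧ y ≠ a ∧ y ≠ b := by
  by_contra hc
  push_neg at hc
  have cover : ∀ x y, H.Adj x y → x = a ∨ x = b ∨ y = a ∨ y = b := by
    intro x y h
    by_cases h1 : x = a; · tauto
    by_cases h2 : x = b; · tauto
    by_cases h3 : y = a; · tauto
    exact Or.inr (Or.inr (Or.inr (hc x y h h1 h2 h3)))
  apply hns
  obtain ⟨b', hb'ne, hcover⟩ : ∃ b', b' ≠ a ∧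
      ∀ x y, H.Adj x y → x = a ∨ x = b' ∨ y = a ∨ y = b' := by
    by_cases hab : b = a
    · obtain ⟨z, hz⟩ := exists_notMem {a} (by simp; omega)
      rw [Finset.mem_singleton] at hz
      refine ⟨z, hz, ?_⟩
      intro x y h
      rcases cover x y h with h | h | h | h <;> subst h <;> try tauto
      all_goals rw [hab]; tauto
    · exact ⟨b, hab, cover⟩
  let n := Fintype.card V
  have h2 : 2 ≤ n := by omega
  let z0 : Fin n := ⟨0, by omega⟩
  let z1 : Fin n := ⟨1, by omega⟩
  let e0 := Fintype.equivFin V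
  let e1 := e0.trans (Equiv.swap (e0 a) z0)
  let e2 := e1.trans (Equiv.swap (e1 b') z1)
  have he1a : e1 a = z0 := by simp [e1]
  have he2a : e2 a = z0 := by
    have hne1 : e1 b' ≠ z0 := by rw [← he1a]; exact fun h => hb'ne (e1.injective h)
    have hz01 : z0 ≠ z1 := by simp [z0, z1, Fin.ext_iff]
    simp only [e2, Equiv.trans_apply, he1a]
    exact Equiv.swap_apply_of_ne_of_ne (Ne.symm hne1) hz01
  have he2b : e2 b' = z1 := by simp [e2]
  refine ⟨e2.toEmbedding, ?_⟩
  intro x y hxy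
  rw [Sgraph, SimpleGraph.fromRel_adj]
  refine ⟨fun h => hxy.ne (e2.injective h), ?_⟩
  have hv : (e2 x).val < 2 ∨ (e2 y).val < 2 := by
    rcases hcover x y hxy with rfl | rfl | rfl | rfl
    · left; rw [he2a]; exact Nat.zero_lt_two
    · left; rw [he2b]; exact Nat.one_lt_two
    · right; rw [he2a]; exact Nat.zero_lt_two
    · right; rw [he2b]; exact Nat.one_lt_two
  tauto



def Goal1 (H : SimpleGraph V) (u₁ : V) : Prop :=
  ∃ x y a b c : V, H.Adj u₁ y ∧ H.Adj y x ∧ x ≠ u₁ ∧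
    a ≠ u₁ ∧ a ≠ x ∧ a ≠ y ∧ b ≠ u₁ ∧ b ≠ x ∧ b ≠ y ∧ c ≠ u₁ ∧ c ≠ x ∧ c ≠ y ∧
    a ≠ c ∧ H.Adj a b ∧ H.Adj b c

def Goal2 (H : SimpleGraph V) (u₁ : V) : Prop :=
  ∃ a b c d e : V, a ≠ u₁ ∧ b ≠ u₁ ∧ c ≠ u₁ ∧ d ≠ u₁ ∧ e ≠ u₁ ∧
    a ≠ c ∧ a ≠ d ∧ a ≠ e ∧ b ≠ d ∧ b ≠ e ∧ c ≠ e ∧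
    H.Adj a b ∧ H.Adj b c ∧ H.Adj c d ∧ H.Adj d e

lemma tri {H : SimpleGraph V} (hH : TwoConnected H) (hcard : 6 ≤ Fintype.card V)
    (u₁ a b c : V)
    (hau : a ≠ u₁) (hbu : b ≠ u₁) (hcu : c ≠ u₁)
    (hab : H.Adj a b) (hac : H.Adj a c) (hbc : H.Adj b c)
    (hmeet3 : ∀ s t, s ≠ u₁ → t ≠ u₁ → H.Adj s t →
      s = a ∨ t = a ∨ (s = b ∧ t = c) ∨ (s = c ∧ t = b)) :
    Goal1 H u₁ := by
  have hcard3 : 3 ≤ Fintype.card V := by omega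
  have hsc : ({u₁, a, b, c} : Finset V).card ≤ 4 := by
    have h1 := Finset.card_insert_le u₁ ({a, b, c} : Finset V)
    have h2 := Finset.card_insert_le a ({b, c} : Finset V)
    have h3 := Finset.card_insert_le b ({c} : Finset V)
    have h4 : ({c} : Finset V).card = 1 := Finset.card_singleton c
    omega
  have hccard : 2 ≤ (({u₁, a, b, c} : Finset V)ᶜ).card := by
    rw [Finset.card_compl]
    omega
  obtain ⟨ℓ, hℓm, ℓ', hℓ'm, hne⟩ := (Finset.one_lt_card (s := (({u₁, a, b, c} : Finset V)ᶜ))).mp (by omega)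
  rw [Finset.mem_compl] at hℓm hℓ'm
  simp only [Finset.mem_insert, Finset.mem_singleton, not_or] at hℓm hℓ'm
  obtain ⟨hℓu, hℓa, hℓb, hℓc⟩ := hℓm
  obtain ⟨hℓ'u, hℓ'a, hℓ'b, hℓ'c⟩ := hℓ'm
  have hkey : ∀ v, v ≠ u₁ → v ≠ a → v ≠ b → v ≠ c → (∀ w, H.Adj v w → w = u₁ ∨ w = a) := by
    intro v h1 h2 h3 h4 w hw
    by_cases hwu : w = u₁; · exact Or.inl hwu
    rcases hmeet3 v w h1 hwu hw with h | h | h | h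
    · exact absurd h h2
    · exact Or.inr h
    · exact absurd h.1 h3
    · exact absurd h.1 h4
  have hadjU : ∀ v, v ≠ u₁ → v ≠ a → v ≠ b → v ≠ c → H.Adj v u₁ := by
    intro v h1 h2 h3 h4
    by_contra hno
    refine only_nbr hH hcard3 v a h2 ?_
    intro w hw
    rcases hkey v h1 h2 h3 h4 w hw with rfl | h
    · exact absurd hw hno
    · exact h
  have hadjA : ∀ v, v ≠ u₁ → v ≠ a → v ≠ b → v ≠ c → H.Adj v a := by
    intro v h1 h2 h3 h4
    obtain ⟨n1, n2, hn, hv1, hv2⟩ := deg2 hH hcard v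
    rcases hkey v h1 h2 h3 h4 n1 hv1 with rfl | rfl
    · rcases hkey v h1 h2 h3 h4 n2 hv2 with rfl | rfl
      · exact absurd rfl hn
      · exact hv2
    · exact hv1
  have hbcU : H.Adj u₁ b ∨ H.Adj u₁ c := by
    by_contra hno
    push_neg at hno
    obtain ⟨w, hw⟩ := W1 hH a ℓ b hℓa hab.ne'
    obtain ⟨x, y, hxs, hys, hx, hy, hxy, -⟩ :=
      cross H (fun z => z = b ∨ z = c) w (fun h => h.elim hℓb hℓc) (Or.inl rfl)
    push_neg at hx
    have hxa := hw x hxs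
    rcases hy with rfl | rfl
    · by_cases hxu : x = u₁
      · subst hxu; exact hno.1 hxy
      · rcases hmeet3 x y hxu hbu hxy with h | h | h | h
        · exact hxa h
        · exact hab.ne' h
        · exact hx.1 h.1
        · exact hx.2 h.1
    · by_cases hxu : x = u₁
      · subst hxu; exact hno.2 hxy
      · rcases hmeet3 x y hxu hcu hxy with h | h | h | h
        · exact hxa h
        · exact hac.ne' h
        · exact hx.1 h.1
        · exact hx.2 h.1
  rcases hbcU with hub | huc
  · exact ⟨c, b, ℓ, a, ℓ', hub, hbc, hcu, hℓu, hℓc, hℓb, hau, hac.ne, hab.ne,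
      hℓ'u, hℓ'c, hℓ'b, hne, hadjA ℓ hℓu hℓa hℓb hℓc, (hadjA ℓ' hℓ'u hℓ'a hℓ'b hℓ'c).symm⟩
  · exact ⟨b, c, ℓ, a, ℓ', huc, hbc.symm, hbu, hℓu, hℓb, hℓc, hau, hab.ne, hac.ne,
      hℓ'u, hℓ'b, hℓ'c, hne, hadjA ℓ hℓu hℓa hℓb hℓc, (hadjA ℓ' hℓ'u hℓ'a hℓ'b hℓ'c).symm⟩

lemma starlike_half {H : SimpleGraph V} (u₁ c₁ c₂ : V)
    (hc₁u : c₁ ≠ u₁) (hc₂u : c₂ ≠ u₁) (hcc : c₁ ≠ c₂)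
    (hnotboth : ∀ t, t ≠ u₁ → t ≠ c₁ → t ≠ c₂ → ¬(H.Adj t c₁ ∧ H.Adj t c₂))
    (ℓ ℓ₂ ℓ₂' : V)
    (hℓ : ℓ ≠ u₁ ∧ ℓ ≠ c₁ ∧ ℓ ≠ c₂ ∧ H.Adj ℓ c₁) (hℓU : H.Adj u₁ ℓ)
    (h2 : ℓ₂ ≠ u₁ ∧ ℓ₂ ≠ c₁ ∧ ℓ₂ ≠ c₂ ∧ H.Adj ℓ₂ c₂)
    (h2' : ℓ₂' ≠ u₁ ∧ ℓ₂' ≠ c₁ ∧ ℓ₂' ≠ c₂ ∧ H.Adj ℓ₂' c₂) (hne : ℓ₂ ≠ ℓ₂') :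
    Goal1 H u₁ := by
  have hℓ2ℓ : ℓ₂ ≠ ℓ := by
    intro h
    exact hnotboth ℓ₂ h2.1 h2.2.1 h2.2.2.1 ⟨h ▸ hℓ.2.2.2, h2.2.2.2⟩
  have hℓ2'ℓ : ℓ₂' ≠ ℓ := by
    intro h
    exact hnotboth ℓ₂' h2'.1 h2'.2.1 h2'.2.2.1 ⟨h ▸ hℓ.2.2.2, h2'.2.2.2⟩
  exact ⟨c₁, ℓ, ℓ₂, c₂, ℓ₂', hℓU, hℓ.2.2.2, hc₁u,
    h2.1, h2.2.1, hℓ2ℓ, hc₂u, Ne.symm hcc, Ne.symm hℓ.2.2.1,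
    h2'.1, h2'.2.1, hℓ2'ℓ, hne, h2.2.2.2, h2'.2.2.2.symm⟩

lemma starlike {H : SimpleGraph V} [DecidableRel H.Adj] (hH : TwoConnected H) (hcard : 6 ≤ Fintype.card V)
    (hcov : ∀ a b : V, ∃ x y, H.Adj x y ∧ x ≠ a ∧ x ≠ b ∧ y ≠ a ∧ y ≠ b)
    (u₁ c₁ c₂ : V) (hc₁u : c₁ ≠ u₁) (hc₂u : c₂ ≠ u₁) (hcc : c₁ ≠ c₂)
    (hmeet : ∀ s t, s ≠ u₁ → t ≠ u₁ → H.Adj s t → s = c₁ ∨ s = c₂ ∨ t = c₁ ∨ t = c₂)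
    (hnotboth : ∀ t, t ≠ u₁ → t ≠ c₁ → t ≠ c₂ → ¬(H.Adj t c₁ ∧ H.Adj t c₂)) :
    Goal1 H u₁ := by
  have hcard3 : 3 ≤ Fintype.card V := by omega
  have hadjU : ∀ v, v ≠ u₁ → v ≠ c₁ → v ≠ c₂ → H.Adj v u₁ := by
    intro v h1 h2 h3
    by_contra hno
    have hnb : ∀ w, H.Adj v w → w = c₁ ∨ w = c₂ := by
      intro w hw
      have hwu : w ≠ u₁ := fun h => hno (h ▸ hw)
      rcases hmeet v w h1 hwu hw with h | h | h | h
      · exact absurd h h2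
      · exact absurd h h3
      · exact Or.inl h
      · exact Or.inr h
    by_cases hv1 : H.Adj v c₁
    · have hv2 : ¬ H.Adj v c₂ := fun h => hnotboth v h1 h2 h3 ⟨hv1, h⟩
      exact only_nbr hH hcard3 v c₁ h2
        (fun w hw => (hnb w hw).resolve_right (fun hh => hv2 (hh ▸ hw)))
    · exact only_nbr hH hcard3 v c₂ h3
        (fun w hw => (hnb w hw).resolve_left (fun hh => hv1 (hh ▸ hw)))
  have hadjC : ∀ v, v ≠ u₁ → v ≠ c₁ → v ≠ c₂ → H.Adj v c₁ ∨ H.Adj v c₂ := by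
    intro v h1 h2 h3
    obtain ⟨n1, n2, hn, hv1, hv2⟩ := deg2 hH hcard v
    have key : ∀ w, H.Adj v w → w = u₁ ∨ w = c₁ ∨ w = c₂ := by
      intro w hw
      by_cases hwu : w = u₁; · tauto
      rcases hmeet v w h1 hwu hw with h | h | h | h
      · exact absurd h h2
      · exact absurd h h3
      · tauto
      · tauto
    rcases key n1 hv1 with rfl | rfl | rfl
    · rcases key n2 hv2 with rfl | rfl | rfl
      · exact absurd rfl hn
      · tauto
      · tauto
    · tauto
    · tauto
  have hO1ne : ∀ (d₁ d₂ : V), d₁ ≠ u₁ → d₂ ≠ u₁ →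
      (∀ s t, s ≠ u₁ → t ≠ u₁ → H.Adj s t → s = d₁ ∨ s = d₂ ∨ t = d₁ ∨ t = d₂) →
      ∃ v, v ≠ u₁ ∧ v ≠ d₁ ∧ v ≠ d₂ ∧ H.Adj v d₁ := by
    intro d₁ d₂ h1 h2 hm
    obtain ⟨s, t, hst, hsu, hsd2, htu, htd2⟩ := hcov u₁ d₂
    by_cases hs : s = d₁
    · subst hs
      exact ⟨t, htu, hst.ne', htd2, hst.symm⟩
    by_cases ht : t = d₁
    · subst ht
      exact ⟨s, hsu, hst.ne, hsd2, hst⟩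
    · rcases hm s t hsu htu hst with h | h | h | h <;> tauto
  obtain ⟨ℓa, hℓa⟩ := hO1ne c₁ c₂ hc₁u hc₂u hmeet
  obtain ⟨ℓb, hℓb⟩ := hO1ne c₂ c₁ hc₂u hc₁u
    (by intro s t h1 h2 h3; rcases hmeet s t h1 h2 h3 with h | h | h | h <;> tauto)
  have hs3 : ({u₁, c₁, c₂} : Finset V).card ≤ 3 := by
    have h1 := Finset.card_insert_le u₁ ({c₁, c₂} : Finset V)
    have h2 := Finset.card_insert_le c₁ ({c₂} : Finset V)
    have h3 : ({c₂} : Finset V).card = 1 := Finset.card_singleton c₂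
    omega
  set O1 : Finset V := (({u₁, c₁, c₂} : Finset V)ᶜ).filter (fun v => H.Adj v c₁) with hO1
  set O2 : Finset V := (({u₁, c₁, c₂} : Finset V)ᶜ).filter (fun v => H.Adj v c₂) with hO2
  have hsub : (({u₁, c₁, c₂} : Finset V)ᶜ) ⊆ O1 ∪ O2 := by
    intro v hv
    have hv' := hv
    rw [Finset.mem_compl] at hv'
    simp only [Finset.mem_insert, Finset.mem_singleton, not_or] at hv'
    rcases hadjC v hv'.1 hv'.2.1 hv'.2.2 with h | h
    · exact Finset.mem_union_left _ (Finset.mem_filter.mpr ⟨hv, h⟩)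
    · exact Finset.mem_union_right _ (Finset.mem_filter.mpr ⟨hv, h⟩)
  have h3le : 3 ≤ (({u₁, c₁, c₂} : Finset V)ᶜ).card := by
    rw [Finset.card_compl]; omega
  have hcase : 2 ≤ O1.card ∨ 2 ≤ O2.card := by
    have hc1 := Finset.card_le_card hsub
    have hc2 := Finset.card_union_le O1 O2
    omega
  rcases hcase with hcse | hcse
  · obtain ⟨x1, hx1, y1, hy1, hxy1⟩ := Finset.one_lt_card.mp (by omega : 1 < O1.card)
    rw [hO1, Finset.mem_filter, Finset.mem_compl] at hx1 hy1
    simp only [Finset.mem_insert, Finset.mem_singleton, not_or] at hx1 hy1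
    refine starlike_half u₁ c₂ c₁ hc₂u hc₁u hcc.symm ?_ ℓb x1 y1
      ⟨hℓb.1, hℓb.2.1, hℓb.2.2.1, hℓb.2.2.2⟩
      ((hadjU ℓb hℓb.1 hℓb.2.2.1 hℓb.2.1).symm)
      ⟨hx1.1.1, hx1.1.2.2, hx1.1.2.1, hx1.2⟩ ⟨hy1.1.1, hy1.1.2.2, hy1.1.2.1, hy1.2⟩ hxy1
    intro t h1 h2 h3 hh
    exact hnotboth t h1 h3 h2 ⟨hh.2, hh.1⟩
  · obtain ⟨x1, hx1, y1, hy1, hxy1⟩ := Finset.one_lt_card.mp (by omega : 1 < O2.card)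
    rw [hO2, Finset.mem_filter, Finset.mem_compl] at hx1 hy1
    simp only [Finset.mem_insert, Finset.mem_singleton, not_or] at hx1 hy1
    exact starlike_half u₁ c₁ c₂ hc₁u hc₂u hcc hnotboth ℓa x1 y1
      ⟨hℓa.1, hℓa.2.1, hℓa.2.2.1, hℓa.2.2.2⟩
      ((hadjU ℓa hℓa.1 hℓa.2.1 hℓa.2.2.1).symm)
      ⟨hx1.1.1, hx1.1.2.1, hx1.1.2.2, hx1.2⟩ ⟨hy1.1.1, hy1.1.2.1, hy1.1.2.2, hy1.2⟩ hxy1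

lemma card5le {a b c d e : V} : ({a, b, c, d, e} : Finset V).card ≤ 5 := by
  have h1 := Finset.card_insert_le a ({b, c, d, e} : Finset V)
  have h2 := Finset.card_insert_le b ({c, d, e} : Finset V)
  have h3 := Finset.card_insert_le c ({d, e} : Finset V)
  have h4 := Finset.card_insert_le d ({e} : Finset V)
  have h5 : ({e} : Finset V).card = 1 := Finset.card_singleton e
  omega

lemma p4side {H : SimpleGraph V} (hH : TwoConnected H) (hcard : 6 ≤ Fintype.card V)
    (u₁ v1 v2 v3 v4 : V)
    (h1u : v1 ≠ u₁) (h2u : v2 ≠ u₁) (h3u : v3 ≠ u₁) (h4u : v4 ≠ u₁)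
    (h12 : H.Adj v1 v2) (h23 : H.Adj v2 v3) (h34 : H.Adj v3 v4)
    (h13d : v1 ≠ v3) (h14d : v1 ≠ v4) (h24d : v2 ≠ v4)
    (hnoP5 : ¬ Goal2 H u₁)
    (hmeet : ∀ s t, s ≠ u₁ → t ≠ u₁ → H.Adj s t → s = v2 ∨ s = v3 ∨ t = v2 ∨ t = v3)
    (hP1 : ∀ z, z ≠ u₁ → z ≠ v1 → z ≠ v2 → z ≠ v3 → z ≠ v4 → ¬H.Adj z v1 ∧ ¬H.Adj z v4)
    (hP2 : ∀ s t, s ≠ u₁ → t ≠ u₁ → s ≠ v1 → s ≠ v2 → s ≠ v3 → s ≠ v4 →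
      t ≠ v1 → t ≠ v2 → t ≠ v3 → t ≠ v4 → ¬H.Adj s t)
    (h13 : H.Adj v1 v3) : Goal1 H u₁ := by
  have houtv2 : ∀ z, z ≠ u₁ → z ≠ v1 → z ≠ v2 → z ≠ v3 → z ≠ v4 → ¬H.Adj z v2 := by
    intro z hz h1 h2 h3 h4 hadj
    exact hnoP5 ⟨z, v2, v1, v3, v4, hz, h2u, h1u, h3u, h4u, h1, h3, h4,
      h23.ne, h24d, h14d, hadj, h12.symm, h13, h34⟩
  obtain ⟨z0, hz0⟩ := exists_notMem ({u₁, v1, v2, v3, v4} : Finset V)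
    (by have := card5le (a := u₁) (b := v1) (c := v2) (d := v3) (e := v4); omega)
  simp only [Finset.mem_insert, Finset.mem_singleton, not_or] at hz0
  obtain ⟨hz0u, hz01, hz02, hz03, hz04⟩ := hz0
  have hz0v3 : H.Adj z0 v3 := by
    obtain ⟨n1, n2, hn, ha1, ha2⟩ := deg2 hH hcard z0
    have key : ∀ w, H.Adj z0 w → w = u₁ ∨ w = v3 := by
      intro w hw
      by_cases hwu : w = u₁; · tauto
      by_cases hw1 : w = v1
      · exact absurd (hw1 ▸ hw) (hP1 z0 hz0u hz01 hz02 hz03 hz04).1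
      by_cases hw2 : w = v2
      · exact absurd (hw2 ▸ hw) (houtv2 z0 hz0u hz01 hz02 hz03 hz04)
      by_cases hw3 : w = v3; · tauto
      by_cases hw4 : w = v4
      · exact absurd (hw4 ▸ hw) (hP1 z0 hz0u hz01 hz02 hz03 hz04).2
      · exact absurd hw (hP2 z0 w hz0u hwu hz01 hz02 hz03 hz04 hw1 hw2 hw3 hw4)
    rcases key n1 ha1 with rfl | rfl
    · rcases key n2 ha2 with rfl | rfl
      · exact absurd rfl hn
      · exact ha2
    · exact ha1
  have hv24 : ¬ H.Adj v2 v4 := by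
    intro h
    exact hnoP5 ⟨z0, v3, v1, v2, v4, hz0u, h3u, h1u, h2u, h4u, hz01, hz02, hz04,
      h23.ne', h34.ne, h14d, hz0v3, h13.symm, h12, h⟩
  have hmeet3 : ∀ s t, s ≠ u₁ → t ≠ u₁ → H.Adj s t →
      s = v3 ∨ t = v3 ∨ (s = v1 ∧ t = v2) ∨ (s = v2 ∧ t = v1) := by
    intro s t hs ht hadj
    rcases hmeet s t hs ht hadj with h | h | h | h
    · by_cases ht3 : t = v3; · tauto
      by_cases ht1 : t = v1; · tauto
      by_cases ht4 : t = v4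
      · rw [h, ht4] at hadj; exact absurd hadj hv24
      by_cases ht2 : t = v2
      · rw [h, ht2] at hadj; exact absurd hadj (H.irrefl)
      · rw [h] at hadj; exact absurd hadj.symm (houtv2 t ht ht1 ht2 ht3 ht4)
    · tauto
    · by_cases hs3 : s = v3; · tauto
      by_cases hs1 : s = v1; · tauto
      by_cases hs4 : s = v4
      · rw [h, hs4] at hadj; exact absurd hadj.symm hv24
      by_cases hs2 : s = v2
      · rw [h, hs2] at hadj; exact absurd hadj (H.irrefl)
      · rw [h] at hadj; exact absurd hadj (houtv2 s hs hs1 hs2 hs3 hs4)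
    · tauto
  exact tri hH hcard u₁ v3 v1 v2 h3u h1u h2u h13.symm h23.symm h12 hmeet3

lemma mainAB {H : SimpleGraph V} [DecidableRel H.Adj] (hH : TwoConnected H)
    (hcard : 6 ≤ Fintype.card V)
    (hcov : ∀ a b : V, ∃ x y, H.Adj x y ∧ x ≠ a ∧ x ≠ b ∧ y ≠ a ∧ y ≠ b) (u₁ : V) :
    Goal1 H u₁ ∨ Goal2 H u₁ := by
  by_cases h5 : Goal2 H u₁
  · exact Or.inr h5
  left
  have hnoP5 := h5
  obtain ⟨ea0, hea0⟩ := exists_notMem ({u₁} : Finset V) (by simp; omega)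
  rw [Finset.mem_singleton] at hea0
  have hle : ({u₁, ea0} : Finset V).card ≤ 2 := (Finset.card_insert_le _ _).trans (by simp)
  obtain ⟨eb0, heb0⟩ := exists_notMem ({u₁, ea0} : Finset V) (by omega)
  simp only [Finset.mem_insert, Finset.mem_singleton, not_or] at heb0
  obtain ⟨w0, hw0⟩ := W1 hH u₁ ea0 eb0 hea0 heb0.1
  obtain ⟨eb, heab, hebs⟩ := first_step w0 (Ne.symm heb0.2)
  have hebu : eb ≠ u₁ := hw0 eb hebs
  have hle3 : ({u₁, ea0, eb} : Finset V).card ≤ 3 := by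
    have h1 := Finset.card_insert_le u₁ ({ea0, eb} : Finset V)
    have h2 := Finset.card_insert_le ea0 ({eb} : Finset V)
    have h3 : ({eb} : Finset V).card = 1 := Finset.card_singleton eb
    omega
  obtain ⟨z, hz⟩ := exists_notMem ({u₁, ea0, eb} : Finset V) (by omega)
  simp only [Finset.mem_insert, Finset.mem_singleton, not_or] at hz
  obtain ⟨w1, hw1⟩ := W1 hH u₁ z ea0 hz.1 hea0
  obtain ⟨x0, y0, hxs0, hys0, hx0, hy0, hxy0, -⟩ :=
    cross H (fun t => t = ea0 ∨ t = eb) w1 (fun h => h.elim hz.2.1 hz.2.2) (Or.inl rfl)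
  push_neg at hx0
  have hx0u := hw1 x0 hxs0
  obtain ⟨p, q, r, hpq, hqr, hpr, hpu, hqu, hru⟩ :
      ∃ p q r : V, H.Adj p q ∧ H.Adj q r ∧ p ≠ r ∧ p ≠ u₁ ∧ q ≠ u₁ ∧ r ≠ u₁ := by
    rcases hy0 with rfl | rfl
    · exact ⟨x0, y0, eb, hxy0, heab, hx0.2, hx0u, hea0, hebu⟩
    · exact ⟨x0, y0, ea0, hxy0, heab.symm, hx0.1, hx0u, hebu, hea0⟩
  by_cases hP4 : ∃ a b c d : V, a ≠ u₁ ∧ b ≠ u₁ ∧ c ≠ u₁ ∧ d ≠ u₁ ∧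
      a ≠ c ∧ a ≠ d ∧ b ≠ d ∧ H.Adj a b ∧ H.Adj b c ∧ H.Adj c d
  case neg =>
    exfalso
    have hmeetq : ∀ s t, s ≠ u₁ → t ≠ u₁ → H.Adj s t → s = q ∨ t = q := by
      intro s t hsu htu hst
      by_contra hcq
      push_neg at hcq
      obtain ⟨hsq, htq⟩ := hcq
      apply hP4
      by_cases hpr' : H.Adj p r
      · have hle4 : ({u₁, p, q, r} : Finset V).card ≤ 4 := by
          have h1 := Finset.card_insert_le u₁ ({p, q, r} : Finset V)
          have h2 := Finset.card_insert_le p ({q, r} : Finset V)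
          have h3 := Finset.card_insert_le q ({r} : Finset V)
          have h4 : ({r} : Finset V).card = 1 := Finset.card_singleton r
          omega
        obtain ⟨z1, hz1⟩ := exists_notMem ({u₁, p, q, r} : Finset V) (by omega)
        simp only [Finset.mem_insert, Finset.mem_singleton, not_or] at hz1
        obtain ⟨hh1, hh2, hh3, hh4⟩ := hz1
        obtain ⟨w2, hw2⟩ := W1 hH u₁ z1 p hh1 hpu
        obtain ⟨x, y, hxs, hys, hx, hy, hxy, -⟩ :=
          cross H (fun t => t = p ∨ t = q ∨ t = r) w2
            (fun h => h.elim hh2 (fun h' => h'.elim hh3 hh4)) (Or.inl rfl)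
        push_neg at hx
        obtain ⟨hxp, hxq, hxr⟩ := hx
        have hxu := hw2 x hxs
        have hyu := hw2 y hys
        rcases hy with rfl | rfl | rfl
        · exact ⟨x, y, q, r, hxu, hyu, hqu, hru, hxq, hxr, hpr, hxy, hpq, hqr⟩
        · exact ⟨x, y, p, r, hxu, hyu, hpu, hru, hxp, hxr, hqr.ne, hxy, hpq.symm, hpr'⟩
        · exact ⟨x, y, p, q, hxu, hyu, hpu, hqu, hxp, hxq, hqr.ne', hxy, hpr'.symm, hpq⟩
      · by_cases hsp : s = p
        · subst hsp
          have htr : t ≠ r := fun h => hpr' (h ▸ hst)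
          exact ⟨t, s, q, r, htu, hsu, hqu, hru, htq, htr, hpr, hst.symm, hpq, hqr⟩
        by_cases hsr : s = r
        · subst hsr
          have htp : t ≠ p := fun h => hpr' ((h ▸ hst).symm)
          exact ⟨t, s, q, p, htu, hsu, hqu, hpu, htq, htp, Ne.symm hpr, hst.symm, hqr.symm, hpq.symm⟩
        by_cases htp : t = p
        · subst htp
          exact ⟨s, t, q, r, hsu, htu, hqu, hru, hsq, hsr, hpr, hst, hpq, hqr⟩
        by_cases htr : t = r
        · subst htr
          exact ⟨s, t, q, p, hsu, htu, hqu, hpu, hsq, hsp, Ne.symm hpr, hst, hqr.symm, hpq.symm⟩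
        by_cases hsq2 : H.Adj s q
        · exact ⟨t, s, q, p, htu, hsu, hqu, hpu, htq, htp, hsp, hst.symm, hsq2, hpq.symm⟩
        by_cases htq2 : H.Adj t q
        · exact ⟨s, t, q, p, hsu, htu, hqu, hpu, hsq, hsp, htp, hst, htq2, hpq.symm⟩
        · obtain ⟨w3, hw3⟩ := W1 hH u₁ s q hsu hqu
          obtain ⟨x, y, hxs, hys, hx, hy, hxy, -⟩ :=
            cross H (fun z => z = q ∨ H.Adj z q) w3 (fun h => h.elim hsq hsq2) (Or.inl rfl)
          push_neg at hx
          obtain ⟨hxq, hxadj⟩ := hx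
          have hxu := hw3 x hxs
          have hyu := hw3 y hys
          have hyq : H.Adj y q := by
            rcases hy with rfl | h
            · exact absurd hxy hxadj
            · exact h
          have hxp : x ≠ p := fun h => hxadj (h ▸ hpq)
          have hxr : x ≠ r := fun h => hxadj (h ▸ hqr.symm)
          by_cases hyp' : y = p
          · subst hyp'
            exact ⟨x, y, q, r, hxu, hyu, hqu, hru, hxq, hxr, hpr, hxy, hpq, hqr⟩
          by_cases hyr : y = r
          · subst hyr
            exact ⟨x, y, q, p, hxu, hyu, hqu, hpu, hxq, hxp, Ne.symm hpr, hxy, hqr.symm, hpq.symm⟩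
          · exact ⟨x, y, q, p, hxu, hyu, hqu, hpu, hxq, hxp, hyp', hxy, hyq, hpq.symm⟩
    obtain ⟨s, t, hst, hs1, hs2, ht1, ht2⟩ := hcov u₁ q
    rcases hmeetq s t hs1 ht1 hst with h | h
    · exact hs2 h
    · exact ht2 h
  case pos =>
    obtain ⟨v1, v2, v3, v4, h1u, h2u, h3u, h4u, h13d, h14d, h24d, h12, h23, h34⟩ := hP4
    have hP1 : ∀ z, z ≠ u₁ → z ≠ v1 → z ≠ v2 → z ≠ v3 → z ≠ v4 →
        ¬H.Adj z v1 ∧ ¬H.Adj z v4 := by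
      intro z hzz hh1 hh2 hh3 hh4
      constructor
      · intro h
        exact hnoP5 ⟨z, v1, v2, v3, v4, hzz, h1u, h2u, h3u, h4u, hh2, hh3, hh4,
          h13d, h14d, h24d, h, h12, h23, h34⟩
      · intro h
        exact hnoP5 ⟨v1, v2, v3, v4, z, h1u, h2u, h3u, h4u, hzz, h13d, h14d,
          Ne.symm hh1, h24d, Ne.symm hh2, Ne.symm hh3, h12, h23, h34, h.symm⟩
    obtain ⟨z0, hz0⟩ := exists_notMem ({u₁, v1, v2, v3, v4} : Finset V)
      (by have := card5le (a := u₁) (b := v1) (c := v2) (d := v3) (e := v4); omega)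
    simp only [Finset.mem_insert, Finset.mem_singleton, not_or] at hz0
    obtain ⟨hz0u, hz01, hz02, hz03, hz04⟩ := hz0
    have hP14 : ¬ H.Adj v1 v4 := by
      intro h14
      obtain ⟨w4, hw4⟩ := W1 hH u₁ z0 v1 hz0u h1u
      obtain ⟨x, y, hxs, hys, hx, hy, hxy, -⟩ :=
        cross H (fun z => z = v1 ∨ z = v2 ∨ z = v3 ∨ z = v4) w4
          (fun h => h.elim hz01 (fun h' => h'.elim hz02 (fun h'' => h''.elim hz03 hz04)))
          (Or.inl rfl)
      push_neg at hx
      obtain ⟨hx1, hx2, hx3, hx4⟩ := hx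
      have hxu := hw4 x hxs
      rcases hy with rfl | rfl | rfl | rfl
      · exact (hP1 x hxu hx1 hx2 hx3 hx4).1 hxy
      · exact hnoP5 ⟨x, y, v1, v4, v3, hxu, h2u, h1u, h4u, h3u, hx1, hx4, hx3,
          h24d, h23.ne, h13d, hxy, h12.symm, h14, h34.symm⟩
      · exact hnoP5 ⟨x, y, v4, v1, v2, hxu, h3u, h4u, h1u, h2u, hx4, hx1, hx2,
          Ne.symm h13d, h23.ne', Ne.symm h24d, hxy, h34, h14.symm, h12⟩
      · exact (hP1 x hxu hx1 hx2 hx3 hx4).2 hxy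
    have hP2 : ∀ s t, s ≠ u₁ → t ≠ u₁ → s ≠ v1 → s ≠ v2 → s ≠ v3 → s ≠ v4 →
        t ≠ v1 → t ≠ v2 → t ≠ v3 → t ≠ v4 → ¬H.Adj s t := by
      intro s t hsu htu hs1 hs2 hs3 hs4 ht1 ht2 ht3 ht4 hst
      have hs2' : ¬H.Adj s v2 := by
        intro h
        exact hnoP5 ⟨t, s, v2, v3, v4, htu, hsu, h2u, h3u, h4u, ht2, ht3, ht4,
          hs3, hs4, h24d, hst.symm, h, h23, h34⟩
      have hs3' : ¬H.Adj s v3 := by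
        intro h
        exact hnoP5 ⟨v1, v2, v3, s, t, h1u, h2u, h3u, hsu, htu, h13d, Ne.symm hs1,
          Ne.symm ht1, Ne.symm hs2, Ne.symm ht2, Ne.symm ht3, h12, h23, h.symm, hst⟩
      obtain ⟨w5, hw5⟩ := W1 hH u₁ s v2 hsu h2u
      obtain ⟨x, y, hxs, hys, hx, hy, hxy, w', hw'⟩ :=
        cross H (fun z => z = v1 ∨ z = v2 ∨ z = v3 ∨ z = v4) w5
          (fun h => h.elim hs1 (fun h' => h'.elim hs2 (fun h'' => h''.elim hs3 hs4)))
          (Or.inr (Or.inl rfl))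
      push_neg at hx
      obtain ⟨hx1, hx2, hx3, hx4⟩ := hx
      have hxu := hw5 x hxs
      rcases hy with rfl | rfl | rfl | rfl
      · exact (hP1 x hxu hx1 hx2 hx3 hx4).1 hxy
      · by_cases hxs' : x = s
        · exact hs2' (hxs' ▸ hxy)
        · obtain ⟨m, hm, hms⟩ := first_step w'.reverse hxs'
          rw [Walk.support_reverse, List.mem_reverse] at hms
          obtain ⟨hmw, hmS⟩ := hw' m hms
          have hmu := hw5 m hmw
          push_neg at hmS
          obtain ⟨hm1, hm2, hm3, hm4⟩ := hmS
          exact hnoP5 ⟨m, x, y, v3, v4, hmu, hxu, h2u, h3u, h4u, hm2, hm3, hm4,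
            hx3, hx4, h24d, hm.symm, hxy, h23, h34⟩
      · by_cases hxs' : x = s
        · exact hs3' (hxs' ▸ hxy)
        · obtain ⟨m, hm, hms⟩ := first_step w'.reverse hxs'
          rw [Walk.support_reverse, List.mem_reverse] at hms
          obtain ⟨hmw, hmS⟩ := hw' m hms
          have hmu := hw5 m hmw
          push_neg at hmS
          obtain ⟨hm1, hm2, hm3, hm4⟩ := hmS
          exact hnoP5 ⟨v1, v2, y, x, m, h1u, h2u, h3u, hxu, hmu, h13d, Ne.symm hx1,
            Ne.symm hm1, Ne.symm hx2, Ne.symm hm2, Ne.symm hm3, h12, h23, hxy.symm, hm⟩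
      · exact (hP1 x hxu hx1 hx2 hx3 hx4).2 hxy
    have hmeet : ∀ s t, s ≠ u₁ → t ≠ u₁ → H.Adj s t → s = v2 ∨ s = v3 ∨ t = v2 ∨ t = v3 := by
      intro s t hsu htu hst
      by_contra hcon
      push_neg at hcon
      obtain ⟨hsB2, hsB3, htB2, htB3⟩ := hcon
      by_cases hs1 : s = v1
      · by_cases ht1 : t = v1; · rw [hs1, ht1] at hst; exact H.irrefl hst
        by_cases ht4 : t = v4; · rw [hs1, ht4] at hst; exact hP14 hst
        · rw [hs1] at hst; exact (hP1 t htu ht1 htB2 htB3 ht4).1 hst.symm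
      by_cases hs4 : s = v4
      · by_cases ht1 : t = v1; · rw [hs4, ht1] at hst; exact hP14 hst.symm
        by_cases ht4 : t = v4; · rw [hs4, ht4] at hst; exact H.irrefl hst
        · rw [hs4] at hst; exact (hP1 t htu ht1 htB2 htB3 ht4).2 hst.symm
      by_cases ht1 : t = v1
      · rw [ht1] at hst; exact (hP1 s hsu hs1 hsB2 hsB3 hs4).1 hst
      by_cases ht4 : t = v4
      · rw [ht4] at hst; exact (hP1 s hsu hs1 hsB2 hsB3 hs4).2 hst
      · exact hP2 s t hsu htu hs1 hsB2 hsB3 hs4 ht1 htB2 htB3 ht4 hst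
    by_cases h13 : H.Adj v1 v3
    · exact p4side hH hcard u₁ v1 v2 v3 v4 h1u h2u h3u h4u h12 h23 h34 h13d h14d h24d
        hnoP5 hmeet hP1 hP2 h13
    by_cases h24 : H.Adj v2 v4
    · refine p4side hH hcard u₁ v4 v3 v2 v1 h4u h3u h2u h1u h34.symm h23.symm h12.symm
        (Ne.symm h24d) (Ne.symm h14d) (Ne.symm h13d) hnoP5 ?_ ?_ ?_ h24.symm
      · intro s t hsu htu hst
        rcases hmeet s t hsu htu hst with h | h | h | h <;> tauto
      · intro z hzz hh4 hh3 hh2 hh1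
        exact ⟨(hP1 z hzz hh1 hh2 hh3 hh4).2, (hP1 z hzz hh1 hh2 hh3 hh4).1⟩
      · intro s t hsu htu hs4 hs3 hs2 hs1 ht4 ht3 ht2 ht1
        exact hP2 s t hsu htu hs1 hs2 hs3 hs4 ht1 ht2 ht3 ht4
    · refine starlike hH hcard hcov u₁ v2 v3 h2u h3u h23.ne hmeet ?_
      rintro t htu ht2 ht3 ⟨ha2, ha3⟩
      by_cases ht1 : t = v1
      · exact h13 (ht1 ▸ ha3)
      by_cases ht4 : t = v4
      · exact h24 ((ht4 ▸ ha2).symm)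
      · exact hnoP5 ⟨v1, v2, t, v3, v4, h1u, h2u, htu, h3u, h4u, Ne.symm ht1,
          h13d, h14d, h23.ne, h24d, ht4, h12, ha2.symm, ha3, h34⟩


lemma adj_inl {H : SimpleGraph V} {u₁ s t : V} (h : H.Adj s t) :
    (attachPath H u₁ 2).Adj (Sum.inl s) (Sum.inl t) := by
  rw [attachPath, SimpleGraph.fromRel_adj]
  exact ⟨by simp [h.ne], Or.inl (Or.inl ⟨s, t, rfl, rfl, h⟩)⟩

lemma adj_p0 {H : SimpleGraph V} {u₁ : V} :
    (attachPath H u₁ 2).Adj (Sum.inl u₁) (Sum.inr 0) := by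
  rw [attachPath, SimpleGraph.fromRel_adj]
  exact ⟨by simp, Or.inl (Or.inr (Or.inl ⟨0, rfl, rfl, rfl⟩))⟩

lemma adj_p1 {H : SimpleGraph V} {u₁ : V} :
    (attachPath H u₁ 2).Adj (Sum.inr (0 : Fin 2)) (Sum.inr (1 : Fin 2)) := by
  rw [attachPath, SimpleGraph.fromRel_adj]
  refine ⟨by simp [Fin.ext_iff], Or.inl (Or.inr (Or.inr ⟨0, 1, rfl, rfl, rfl⟩))⟩

lemma Lval (i : Fin 2) : (![5, 3] : Fin 2 → ℕ) i = if i.val = 0 then 5 else 3 := by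
  fin_cases i <;> rfl

def pick {X : Type*} (v : Fin 5 → X) (w : Fin 3 → X) (i : Fin 2) (k : Fin (![5, 3] i)) : X :=
  if h : k.val < 5 ∧ i.val = 0 then v ⟨k.val, h.1⟩
  else w ⟨k.val, by
    have hk := k.isLt
    have hL := Lval i
    by_cases hi : i.val = 0
    · rw [if_pos hi] at hL
      exact absurd ⟨by omega, hi⟩ h
    · rw [if_neg hi] at hL
      omega⟩

lemma containsForest53 {X : Type*} (G : SimpleGraph X) (v : Fin 5 → X) (w : Fin 3 → X)
    (hv : Function.Injective v) (hw : Function.Injective w) (hvw : ∀ i j, v i ≠ w j)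
    (hav : ∀ (k : ℕ) (h : k + 1 < 5), G.Adj (v ⟨k, by omega⟩) (v ⟨k + 1, h⟩))
    (haw : ∀ (k : ℕ) (h : k + 1 < 3), G.Adj (w ⟨k, by omega⟩) (w ⟨k + 1, h⟩)) :
    ContainsForest G ![5, 3] := by
  refine ⟨pick v w, ?_, ?_, ?_⟩
  · intro i a b hab
    unfold pick at hab
    split_ifs at hab with h1 h2 h2
    · exact Fin.ext (Fin.mk.inj_iff.mp (hv hab))
    · exact absurd hab (hvw _ _)
    · exact absurd hab.symm (hvw _ _)
    · exact Fin.ext (Fin.mk.inj_iff.mp (hw hab))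
  · intro i j hij a b hab
    unfold pick at hab
    split_ifs at hab with h1 h2 h2
    · exact hij (Fin.ext (h1.2.trans h2.2.symm))
    · exact hvw _ _ hab
    · exact hvw _ _ hab.symm
    · have ha := a.isLt
      have hb := b.isLt
      have hLi := Lval i
      have hLj := Lval j
      have hi0 : i.val ≠ 0 := by
        intro h
        rw [if_pos h] at hLi
        exact h1 ⟨by omega, h⟩
      have hj0 : j.val ≠ 0 := by
        intro h
        rw [if_pos h] at hLj
        exact h2 ⟨by omega, h⟩
      have hi2 := i.isLt
      have hj2 := j.isLt
      exact hij (Fin.ext (by omega))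
  · intro i k hk
    have hk' := hk
    have hL := Lval i
    unfold pick
    by_cases hi : i.val = 0
    · rw [if_pos hi] at hL
      split_ifs with h1 h2 h2
      · exact hav k (by omega)
      · exact absurd ⟨(by omega : k + 1 < 5), hi⟩ h2
      · exact absurd ⟨(by omega : k < 5), hi⟩ h1
      · exact absurd ⟨(by omega : k < 5), hi⟩ h1
    · rw [if_neg hi] at hL
      split_ifs with h1 h2 h2
      · exact absurd h1.2 hi
      · exact absurd h1.2 hi
      · exact absurd h2.2 hi
      · exact haw k (by omega)

lemma stmt12_main {V : Type*} [Fintype V] [DecidableEq V] (H : SimpleGraph V)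
    [DecidableRel H.Adj] (hH : TwoConnected H) (hcard : 6 ≤ Fintype.card V)
    (hns : ¬ SubgraphOf H (Sgraph (Fintype.card V) 2)) (u₁ : V) :
    ContainsForest (attachPath H u₁ 2) ![5, 3] := by
  have hcov : ∀ a b : V, ∃ x y, H.Adj x y ∧ x ≠ a ∧ x ≠ b ∧ y ≠ a ∧ y ≠ b :=
    fun a b => cover_contra hcard hns a b
  rcases mainAB hH hcard hcov u₁ with h1 | h2
  · obtain ⟨x, y, a, b, c, huy, hyx, hxu, hau, hax, hay, hbu, hbx, hby,
      hcu, hcx, hcy, hac, hab, hbc⟩ := h1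
    have hxy : x ≠ y := hyx.ne'
    have hyu : y ≠ u₁ := huy.ne'
    have habn : a ≠ b := hab.ne
    have hbcn : b ≠ c := hbc.ne
    have hxa : x ≠ a := Ne.symm hax
    have hxb : x ≠ b := Ne.symm hbx
    have hxc : x ≠ c := Ne.symm hcx
    have hya : y ≠ a := Ne.symm hay
    have hyb : y ≠ b := Ne.symm hby
    have hyc : y ≠ c := Ne.symm hcy
    have hua : u₁ ≠ a := Ne.symm hau
    have hub : u₁ ≠ b := Ne.symm hbu
    have huc : u₁ ≠ c := Ne.symm hcu
    clear hcov hns hH hcard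
    refine containsForest53 (attachPath H u₁ 2)
      (fun k => if k.val = 0 then Sum.inl x else if k.val = 1 then Sum.inl y else
        if k.val = 2 then Sum.inl u₁ else if k.val = 3 then Sum.inr 0 else Sum.inr 1)
      (fun k => if k.val = 0 then Sum.inl a else if k.val = 1 then Sum.inl b else Sum.inl c)
      ?_ ?_ ?_ ?_ ?_
    · intro k l h
      fin_cases k <;> fin_cases l <;> simp_all (config := { decide := true })
    · intro k l h
      fin_cases k <;> fin_cases l <;> simp_all (config := { decide := true })
    · intro k l
      fin_cases k <;> fin_cases l <;> simp_all (config := { decide := true })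
    · intro k hk
      have hkb : k < 4 := by omega
      interval_cases k
      · simpa using adj_inl hyx.symm
      · simpa using adj_inl huy.symm
      · simpa using adj_p0
      · simpa using adj_p1
    · intro k hk
      have hkb : k < 2 := by omega
      interval_cases k
      · simpa using adj_inl hab
      · simpa using adj_inl hbc
  · obtain ⟨a, b, c, d, e, hau, hbu, hcu, hdu, heu, hac, had, hae, hbd, hbe, hce,
      hab, hbc, hcd, hde⟩ := h2
    have habn : a ≠ b := hab.ne
    have hbcn : b ≠ c := hbc.ne
    have hcdn : c ≠ d := hcd.ne
    have hden : d ≠ e := hde.ne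
    clear hcov hns hH hcard
    refine containsForest53 (attachPath H u₁ 2)
      (fun k => if k.val = 0 then Sum.inl a else if k.val = 1 then Sum.inl b else
        if k.val = 2 then Sum.inl c else if k.val = 3 then Sum.inl d else Sum.inl e)
      (fun k => if k.val = 0 then Sum.inl u₁ else if k.val = 1 then Sum.inr 0 else Sum.inr 1)
      ?_ ?_ ?_ ?_ ?_
    · intro k l h
      fin_cases k <;> fin_cases l <;> simp_all (config := { decide := true })
    · intro k l h
      fin_cases k <;> fin_cases l <;> simp_all (config := { decide := true })
    · intro k l
      fin_cases k <;> fin_cases l <;> simp_all (config := { decide := true })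
    · intro k hk
      have hkb : k < 4 := by omega
      interval_cases k
      · simpa using adj_inl hab
      · simpa using adj_inl hbc
      · simpa using adj_inl hcd
      · simpa using adj_inl hde
    · intro k hk
      have hkb : k < 2 := by omega
      interval_cases k
      · simpa using adj_p0
      · simpa using adj_p1

end Stmt12Aux

theorem stmt_12 {V : Type*} [Fintype V] [DecidableEq V] (H : SimpleGraph V)
    [DecidableRel H.Adj] (hH : TwoConnected H) (hcard : 6 ≤ Fintype.card V)
    (hns : ¬ SubgraphOf H (Sgraph (Fintype.card V) 2)) (u₁ : V) :
    ContainsForest (attachPath H u₁ 2) ![5, 3] := by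
  exact Stmt12Aux.stmt12_main H hH hcard hns u₁
end
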